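/- arXiv:0807.0999 — 3 statements merged into one kernel-verified Lean document; each statement's English description precedes it below -/
import Mathlib

section
/- Let k be a field and H a Hopf algebra over k with comultiplication Δ, counit ε and antipode S. Let G′ be a set of k-algebra homomorphisms H → k such that: ε ∈ G′; for all f, g ∈ G′ the convolution f ⋆ g (defined by (f ⋆ g)(x) = m_k((f ⊗ g)(Δx))) belongs to G′; and for all f ∈ G′ the composite f ∘ S belongs to G′. Define J := { x ∈ H : f(x) = 0 for all f ∈ G′ }. Then J is a Hopf ideal of H: J is a two-sided ideal, ε(J) = 0, S(J) ⊆ J, and Δ(J) ⊆ J⊗H + H⊗J, where J⊗H and H⊗J denote the images of J ⊗ H and H ⊗ J inside H ⊗ H. (This is the key step showing that the common vanishing ideal of a subgroup of the character group is a Hopf ideal, so that the quotient H/J is again a Hopf algebra.) -/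
open scoped TensorProduct
open LinearMap

section Separation

variable {k : Type} [Field k] {V W X : Type} [AddCommGroup V] [Module k V]
  [AddCommGroup W] [Module k W] [AddCommGroup X] [Module k X]

private lemma coord_rTensor {ι : Type} [DecidableEq ι] (bW : Module.Basis ι k W) (φ : V →ₗ[k] k)
    (u : V ⊗[k] W) (j : ι) :
    TensorProduct.finsuppScalarRight k k k ι
      ((TensorProduct.congr (LinearEquiv.refl k k) bW.repr) (rTensor W φ u)) j
    = φ (TensorProduct.finsuppScalarRight k k V ι
      ((TensorProduct.congr (LinearEquiv.refl k V) bW.repr) u) j) := by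
  induction u using TensorProduct.induction_on with
  | zero => simp only [map_zero, LinearEquiv.map_zero, Finsupp.coe_zero, Pi.zero_apply]
  | tmul v w =>
      simp [TensorProduct.finsuppScalarRight_apply_tmul_apply, mul_comm]
  | add a b ha hb =>
      simp only [map_add, LinearEquiv.map_add, Finsupp.add_apply, ha, hb]

private lemma coord_lTensor {ι : Type} [DecidableEq ι] (bX : Module.Basis ι k X) (ψ : W →ₗ[k] k)
    (t : X ⊗[k] W) (j : ι) :
    TensorProduct.finsuppScalarLeft k k ι
      ((TensorProduct.congr bX.repr (LinearEquiv.refl k k)) (lTensor X ψ t)) j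
    = ψ (TensorProduct.finsuppScalarLeft k W ι
      ((TensorProduct.congr bX.repr (LinearEquiv.refl k W)) t) j) := by
  induction t using TensorProduct.induction_on with
  | zero => simp only [map_zero, LinearEquiv.map_zero, Finsupp.coe_zero, Pi.zero_apply]
  | tmul x w =>
      simp [TensorProduct.finsuppScalarLeft_apply_tmul_apply, mul_comm]
  | add a b ha hb =>
      simp only [map_add, LinearEquiv.map_add, Finsupp.add_apply, ha, hb]

/-- If a family of functionals separates points of `V`, then applying them on the left
factor jointly detects vanishing of elements of `V ⊗ W`. -/
private lemma rsep (S : Set (V →ₗ[k] k)) (hS : ∀ v : V, (∀ φ ∈ S, φ v = 0) → v = 0)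
    (u : V ⊗[k] W) (h : ∀ φ ∈ S, rTensor W φ u = 0) : u = 0 := by
  classical
  let bW := Module.Basis.ofVectorSpace k W
  set c := TensorProduct.finsuppScalarRight k k V (Module.Basis.ofVectorSpaceIndex k W)
      ((TensorProduct.congr (LinearEquiv.refl k V) bW.repr) u) with hc
  have hcz : c = 0 := by
    ext j
    refine hS (c j) fun φ hφ => ?_
    have := coord_rTensor bW φ u j
    rw [h φ hφ] at this
    simp only [map_zero, Finsupp.coe_zero, Pi.zero_apply] at this
    rw [hc]
    exact this.symm
  have h1 : (TensorProduct.congr (LinearEquiv.refl k V) bW.repr) u = 0 :=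
    (LinearEquiv.map_eq_zero_iff _).mp (by rw [← hc] at *; exact hcz)
  exact (LinearEquiv.map_eq_zero_iff _).mp h1

/-- Same on the right factor. -/
private lemma lsep (T : Set (W →ₗ[k] k)) (hT : ∀ w : W, (∀ ψ ∈ T, ψ w = 0) → w = 0)
    (t : X ⊗[k] W) (h : ∀ ψ ∈ T, lTensor X ψ t = 0) : t = 0 := by
  classical
  let bX := Module.Basis.ofVectorSpace k X
  set c := TensorProduct.finsuppScalarLeft k W (Module.Basis.ofVectorSpaceIndex k X)
      ((TensorProduct.congr bX.repr (LinearEquiv.refl k W)) t) with hc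
  have hcz : c = 0 := by
    ext j
    refine hT (c j) fun ψ hψ => ?_
    have := coord_lTensor bX ψ t j
    rw [h ψ hψ] at this
    simp only [map_zero, Finsupp.coe_zero, Pi.zero_apply] at this
    rw [hc]
    exact this.symm
  have h1 : (TensorProduct.congr bX.repr (LinearEquiv.refl k W)) t = 0 :=
    (LinearEquiv.map_eq_zero_iff _).mp (by rw [← hc] at *; exact hcz)
  exact (LinearEquiv.map_eq_zero_iff _).mp h1

/-- Jointly separating families of functionals on `V` and `W` detect vanishing in
`V ⊗ W`. -/
private lemma sep (S : Set (V →ₗ[k] k)) (T : Set (W →ₗ[k] k))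
    (hS : ∀ v : V, (∀ φ ∈ S, φ v = 0) → v = 0)
    (hT : ∀ w : W, (∀ ψ ∈ T, ψ w = 0) → w = 0)
    (u : V ⊗[k] W) (h : ∀ φ ∈ S, ∀ ψ ∈ T, TensorProduct.map φ ψ u = 0) : u = 0 := by
  refine rsep S hS u fun φ hφ => ?_
  refine lsep T hT (rTensor W φ u) fun ψ hψ => ?_
  have := h φ hφ ψ hψ
  rw [← lTensor_comp_rTensor] at this
  exact this

end Separation

/-- Let `H` be a Hopf algebra over a field `k` and `G'` a set of
characters `H → k` containing the counit and closed under convolution and under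
composition with the antipode.  Then the common vanishing set
`J = {x | f(x) = 0 for all f ∈ G'}` is a Hopf ideal: a two-sided ideal with `ε(J) = 0`,
`S(J) ⊆ J` and `Δ(J) ⊆ J⊗H + H⊗J`. -/
theorem vanishing_ideal_is_hopf_ideal
    (k H : Type) [Field k] [Ring H] [HopfAlgebra k H]
    (G' : Set (H →ₐ[k] k))
    (hcounit : Bialgebra.counitAlgHom k H ∈ G')
    (hconv : ∀ f ∈ G', ∀ g ∈ G', ∃ h ∈ G', ∀ x : H,
      h x = LinearMap.mul' k k
        (TensorProduct.map f.toLinearMap g.toLinearMap (Coalgebra.comul (R := k) x)))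
    (hantipode : ∀ f ∈ G', ∃ h ∈ G', ∀ x : H,
      h x = f (HopfAlgebra.antipode (R := k) x))
    (J : Submodule k H)
    (hJ : ∀ x : H, x ∈ J ↔ ∀ f ∈ G', f x = 0) :
    (∀ x ∈ J, ∀ r : H, r * x ∈ J ∧ x * r ∈ J) ∧
    (∀ x ∈ J, Coalgebra.counit (R := k) x = 0) ∧
    (∀ x ∈ J, HopfAlgebra.antipode (R := k) x ∈ J) ∧
    (∀ x ∈ J, Coalgebra.comul (R := k) x ∈
      Submodule.map₂ (TensorProduct.mk k H H) J ⊤ ⊔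
        Submodule.map₂ (TensorProduct.mk k H H) (⊤ : Submodule k H) J) := by
  refine ⟨?_, ?_, ?_, ?_⟩
  · intro x hx r
    constructor <;>
      · rw [hJ]
        intro f hf
        simp [map_mul, (hJ x).1 hx f hf]
  · intro x hx
    have := (hJ x).1 hx _ hcounit
    simpa using this
  · intro x hx
    rw [hJ]
    intro f hf
    obtain ⟨h, hh, heq⟩ := hantipode f hf
    rw [← heq x]
    exact (hJ x).1 hx h hh
  · intro x hx
    -- the separating family on the quotient H ⧸ J
    set S : Set ((H ⧸ J) →ₗ[k] k) :=
      {φ | ∃ f ∈ G', ∀ y : H, φ (J.mkQ y) = f y} with hSdef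
    have hSsep : ∀ v : H ⧸ J, (∀ φ ∈ S, φ v = 0) → v = 0 := by
      intro v hv
      obtain ⟨y, rfl⟩ := J.mkQ_surjective v
      rw [Submodule.mkQ_apply, Submodule.Quotient.mk_eq_zero, hJ]
      intro f hf
      have hle : J ≤ LinearMap.ker f.toLinearMap := by
        intro z hz
        simpa using (hJ z).1 hz f hf
      have hmem : J.liftQ f.toLinearMap hle ∈ S :=
        ⟨f, hf, fun y => by simp⟩
      have := hv _ hmem
      simpa using this
    -- the image of comul x in the tensor square of the quotient vanishes
    have hu0 : TensorProduct.map J.mkQ J.mkQ (Coalgebra.comul (R := k) x) = 0 := by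
      refine sep S S hSsep hSsep _ ?_
      rintro φ ⟨f, hf, hφ⟩ ψ ⟨g, hg, hψ⟩
      have hcomp : TensorProduct.map φ ψ ∘ₗ TensorProduct.map J.mkQ J.mkQ =
          TensorProduct.map f.toLinearMap g.toLinearMap := by
        rw [← TensorProduct.map_comp]
        congr 1
        · exact LinearMap.ext fun y => by simpa using hφ y
        · exact LinearMap.ext fun y => by simpa using hψ y
      have h0 : TensorProduct.map f.toLinearMap g.toLinearMap
          (Coalgebra.comul (R := k) x) = 0 := by
        obtain ⟨h, hh, heq⟩ := hconv f hf g hg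
        have hz : LinearMap.mul' k k (TensorProduct.map f.toLinearMap g.toLinearMap
            (Coalgebra.comul (R := k) x)) = 0 := by
          rw [← heq x]
          exact (hJ x).1 hx h hh
        have hmul : (LinearMap.mul' k k : k ⊗[k] k →ₗ[k] k) =
            (TensorProduct.lid k k).toLinearMap := by
          apply TensorProduct.ext'
          intro a b
          simp [smul_eq_mul]
        rw [hmul] at hz
        exact (LinearEquiv.map_eq_zero_iff _).mp hz
      calc TensorProduct.map φ ψ (TensorProduct.map J.mkQ J.mkQ (Coalgebra.comul (R := k) x))
          = (TensorProduct.map φ ψ ∘ₗ TensorProduct.map J.mkQ J.mkQ)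
              (Coalgebra.comul (R := k) x) := rfl
        _ = 0 := by rw [hcomp, h0]
    -- compute the kernel of mkQ ⊗ mkQ
    have h1 : LinearMap.range (lTensor H J.subtype) =
        Submodule.map₂ (TensorProduct.mk k H H) (⊤ : Submodule k H) J := by
      apply le_antisymm
      · rintro _ ⟨t, rfl⟩
        induction t using TensorProduct.induction_on with
        | zero => simpa using zero_mem _
        | tmul a b =>
            simpa using Submodule.apply_mem_map₂ (TensorProduct.mk k H H)
              (Submodule.mem_top (x := a)) b.2
        | add s t hs ht => simpa [map_add] using add_mem hs ht
      · rw [Submodule.map₂_le]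
        intro a _ b hb
        exact ⟨a ⊗ₜ ⟨b, hb⟩, by simp⟩
    have h2 : LinearMap.range (rTensor H J.subtype) =
        Submodule.map₂ (TensorProduct.mk k H H) J (⊤ : Submodule k H) := by
      apply le_antisymm
      · rintro _ ⟨t, rfl⟩
        induction t using TensorProduct.induction_on with
        | zero => simpa using zero_mem _
        | tmul a b =>
            simpa using Submodule.apply_mem_map₂ (TensorProduct.mk k H H)
              a.2 (Submodule.mem_top (x := b))
        | add s t hs ht => simpa [map_add] using add_mem hs ht
      · rw [Submodule.map₂_le]
        intro a ha b _
        exact ⟨(⟨a, ha⟩ : J) ⊗ₜ b, by simp⟩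
    have hker : LinearMap.ker (TensorProduct.map J.mkQ J.mkQ) =
        Submodule.map₂ (TensorProduct.mk k H H) (⊤ : Submodule k H) J ⊔
          Submodule.map₂ (TensorProduct.mk k H H) J (⊤ : Submodule k H) := by
      rw [TensorProduct.map_ker (LinearMap.exact_subtype_mkQ J) (Submodule.mkQ_surjective J)
        (LinearMap.exact_subtype_mkQ J) (Submodule.mkQ_surjective J), h1, h2]
    have hmem : Coalgebra.comul (R := k) x ∈
        LinearMap.ker (TensorProduct.map J.mkQ J.mkQ) := hu0
    rw [hker] at hmem
    rwa [sup_comm] at hmem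
end

section
/- Let k be a field and H a bialgebra over k equipped with a grading H = ⊕_{n∈ℕ} H_n by k-submodules such that H_i·H_j ⊆ H_{i+j}, the comultiplication satisfies Δ(H_n) ⊆ ∑_{i+j=n} H_i ⊗ H_j (as submodules of H ⊗ H), and H_0 = k·1. Then H admits an antipode: there exists a k-linear map S : H → H satisfying m ∘ (S ⊗ id) ∘ Δ = η ∘ ε = m ∘ (id ⊗ S) ∘ Δ, so that H is a Hopf algebra. (This underlies the recursive formula S(Γ) = −Γ − ∑_{γ⊊Γ} S(γ) Γ/γ defining the antipode in the connected graded Hopf algebra of Feynman graphs.) -/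
open scoped TensorProduct DirectSum
open Coalgebra

section Aux
variable (k H : Type) [Field k] [Ring H] [Bialgebra k H]
noncomputable def myconv (f g : H →ₗ[k] H) : H →ₗ[k] H :=
  LinearMap.mul' k H ∘ₗ TensorProduct.map f g ∘ₗ Coalgebra.comul
noncomputable def myunit : H →ₗ[k] H :=
  Algebra.linearMap k H ∘ₗ Coalgebra.counit
variable {k H}
lemma myconv_apply_repr (f g : H →ₗ[k] H) {x : H} {ι : Type*} (r : Coalgebra.Repr k x ι) :
    myconv k H f g x = ∑ i ∈ r.index, f (r.left i) * g (r.right i) := by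
  simp only [myconv, LinearMap.comp_apply, ← r.eq, map_sum, TensorProduct.map_tmul,
    LinearMap.mul'_apply]

lemma sum_smul_left_eq {x : H} {ι : Type*} (r : Coalgebra.Repr k x ι) :
    ∑ i ∈ r.index, Coalgebra.counit (R := k) (r.left i) • r.right i = x := by
  calc ∑ i ∈ r.index, Coalgebra.counit (R := k) (r.left i) • r.right i
      = TensorProduct.lid k H (∑ i ∈ r.index,
          Coalgebra.counit (R := k) (r.left i) ⊗ₜ[k] r.right i) := by
        rw [map_sum]; simp
    _ = x := by rw [Coalgebra.sum_counit_tmul_eq r]; simp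

lemma sum_smul_right_eq {x : H} {ι : Type*} (r : Coalgebra.Repr k x ι) :
    ∑ i ∈ r.index, Coalgebra.counit (R := k) (r.right i) • r.left i = x := by
  calc ∑ i ∈ r.index, Coalgebra.counit (R := k) (r.right i) • r.left i
      = TensorProduct.rid k H (∑ i ∈ r.index,
          r.left i ⊗ₜ[k] Coalgebra.counit (R := k) (r.right i)) := by
        rw [map_sum]; simp
    _ = x := by rw [Coalgebra.sum_tmul_counit_eq r]; simp

lemma myconv_unit_left (f : H →ₗ[k] H) : myconv k H (myunit k H) f = f := by
  ext x
  have r := Coalgebra.Repr.arbitrary k x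
  rw [myconv_apply_repr _ _ r]
  have : ∀ i, (myunit k H) (r.left i) * f (r.right i)
      = Coalgebra.counit (R := k) (r.left i) • f (r.right i) := by
    intro i; simp [myunit, Algebra.smul_def]
  simp_rw [this, ← map_smul, ← map_sum, sum_smul_left_eq r]

lemma myconv_unit_right (f : H →ₗ[k] H) : myconv k H f (myunit k H) = f := by
  ext x
  have r := Coalgebra.Repr.arbitrary k x
  rw [myconv_apply_repr _ _ r]
  have : ∀ i, f (r.left i) * (myunit k H) (r.right i)
      = Coalgebra.counit (R := k) (r.right i) • f (r.left i) := by
    intro i; simp [myunit, ← Algebra.commutes, Algebra.smul_def]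
  simp_rw [this, ← map_smul, ← map_sum, sum_smul_right_eq r]


lemma myconv_assoc (f g h : H →ₗ[k] H) :
    myconv k H (myconv k H f g) h = myconv k H f (myconv k H g h) := by
  ext x
  set r := Coalgebra.Repr.arbitrary k x with hr
  set a₁ : ∀ i : r.ι, Coalgebra.Repr k (r.left i) (H × H) := fun i => Coalgebra.Repr.arbitrary k (r.left i)
  set a₂ : ∀ i : r.ι, Coalgebra.Repr k (r.right i) (H × H) := fun i => Coalgebra.Repr.arbitrary k (r.right i)
  have key := Coalgebra.sum_map_tmul_tmul_eq (R := k) f g h x (repr := r) (a₁ := a₁) (a₂ := a₂)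
  have k2 := congrArg (LinearMap.mul' k H ∘ₗ (LinearMap.mul' k H).lTensor H) key
  simp only [LinearMap.comp_apply, map_sum, LinearMap.lTensor_tmul, LinearMap.mul'_apply] at k2
  rw [myconv_apply_repr _ _ r, myconv_apply_repr _ _ r]
  have l1 : ∀ i, myconv k H f g (r.left i)
      = ∑ j ∈ (a₁ i).index, f ((a₁ i).left j) * g ((a₁ i).right j) :=
    fun i => myconv_apply_repr f g (a₁ i)
  have l2 : ∀ i, myconv k H g h (r.right i)
      = ∑ j ∈ (a₂ i).index, g ((a₂ i).left j) * h ((a₂ i).right j) :=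
    fun i => myconv_apply_repr g h (a₂ i)
  simp_rw [l1, l2, Finset.sum_mul, Finset.mul_sum, mul_assoc]
  exact k2.symm

lemma myconv_add_left (f₁ f₂ g : H →ₗ[k] H) :
    myconv k H (f₁ + f₂) g = myconv k H f₁ g + myconv k H f₂ g := by
  ext x
  have r := Coalgebra.Repr.arbitrary k x
  simp only [LinearMap.add_apply, myconv_apply_repr _ _ r, LinearMap.add_apply, add_mul,
    Finset.sum_add_distrib]

lemma myconv_add_right (f g₁ g₂ : H →ₗ[k] H) :
    myconv k H f (g₁ + g₂) = myconv k H f g₁ + myconv k H f g₂ := by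
  ext x
  have r := Coalgebra.Repr.arbitrary k x
  simp only [LinearMap.add_apply, myconv_apply_repr _ _ r, LinearMap.add_apply, mul_add,
    Finset.sum_add_distrib]

lemma myconv_sum_right {ι : Type} (f : H →ₗ[k] H) (s : Finset ι) (c : ι → k)
    (g : ι → (H →ₗ[k] H)) :
    myconv k H f (∑ i ∈ s, c i • g i) = ∑ i ∈ s, c i • myconv k H f (g i) := by
  ext x
  have r := Coalgebra.Repr.arbitrary k x
  simp only [LinearMap.sum_apply, LinearMap.smul_apply, myconv_apply_repr _ _ r,
    Finset.mul_sum, mul_smul_comm]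
  rw [Finset.sum_comm]; simp_rw [Finset.smul_sum]

lemma myconv_sum_left {ι : Type} (g : H →ₗ[k] H) (s : Finset ι) (c : ι → k)
    (f : ι → (H →ₗ[k] H)) :
    myconv k H (∑ i ∈ s, c i • f i) g = ∑ i ∈ s, c i • myconv k H (f i) g := by
  ext x
  have r := Coalgebra.Repr.arbitrary k x
  simp only [LinearMap.sum_apply, LinearMap.smul_apply, myconv_apply_repr _ _ r,
    Finset.sum_mul, smul_mul_assoc]
  rw [Finset.sum_comm]; simp_rw [Finset.smul_sum]
variable (k H) in
/-- convolution powers of `id - unit` -/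
noncomputable def Ppow : ℕ → (H →ₗ[k] H)
  | 0 => myunit k H
  | m+1 => myconv k H (LinearMap.id - myunit k H) (Ppow m)

lemma myconv_Ppow (m : ℕ) :
    myconv k H (Ppow k H m) (LinearMap.id - myunit k H) = Ppow k H (m + 1) := by
  induction m with
  | zero =>
      show myconv k H (myunit k H) _ = myconv k H _ (myunit k H)
      rw [myconv_unit_left, myconv_unit_right]
  | succ m ih =>
      show myconv k H (myconv k H _ (Ppow k H m)) _ = _
      rw [myconv_assoc, ih]; rfl

lemma comul_mem_ker (𝒜 : ℕ → Submodule k H)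
    (hcomul : ∀ n : ℕ,
      (𝒜 n).map (Coalgebra.comul (R := k) (A := H)) ≤
        ⨆ (p : ℕ × ℕ) (_ : p.1 + p.2 = n),
          Submodule.map₂ (TensorProduct.mk k H H) (𝒜 p.1) (𝒜 p.2))
    (n : ℕ) {x : H} (hx : x ∈ 𝒜 n) (D : H ⊗[k] H →ₗ[k] H)
    (h : ∀ i j, i + j = n → ∀ a ∈ 𝒜 i, ∀ b ∈ 𝒜 j, D (a ⊗ₜ[k] b) = 0) :
    D (Coalgebra.comul (R := k) x) = 0 := by
  have h1 : Coalgebra.comul (R := k) x ∈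
      ⨆ (p : ℕ × ℕ) (_ : p.1 + p.2 = n),
        Submodule.map₂ (TensorProduct.mk k H H) (𝒜 p.1) (𝒜 p.2) :=
    hcomul n ⟨x, hx, rfl⟩
  refine (?_ : _ ≤ LinearMap.ker D) h1
  refine iSup₂_le fun p hp => Submodule.map₂_le.2 fun a ha b hb => ?_
  exact LinearMap.mem_ker.2 (h p.1 p.2 hp a ha b hb)

lemma N_vanish (𝒜 : ℕ → Submodule k H) (hconn : 𝒜 0 = Submodule.span k {(1 : H)})
    {x : H} (hx : x ∈ 𝒜 0) : (LinearMap.id - myunit k H : H →ₗ[k] H) x = 0 := by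
  rw [hconn, Submodule.mem_span_singleton] at hx
  obtain ⟨c, rfl⟩ := hx
  have h1 : (LinearMap.id - myunit k H : H →ₗ[k] H) (1 : H) = 0 := by
    simp [myunit, Bialgebra.counit_one]
  rw [map_smul, h1, smul_zero]

lemma Ppow_vanish (𝒜 : ℕ → Submodule k H)
    (hcomul : ∀ n : ℕ,
      (𝒜 n).map (Coalgebra.comul (R := k) (A := H)) ≤
        ⨆ (p : ℕ × ℕ) (_ : p.1 + p.2 = n),
          Submodule.map₂ (TensorProduct.mk k H H) (𝒜 p.1) (𝒜 p.2))
    (hconn : 𝒜 0 = Submodule.span k {(1 : H)}) :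
    ∀ n m : ℕ, n < m → ∀ x ∈ 𝒜 n, Ppow k H m x = 0 := by
  intro n
  induction n using Nat.strong_induction_on with
  | _ n ih =>
    intro m hm x hx
    obtain ⟨m, rfl⟩ : ∃ m', m = m' + 1 := ⟨m - 1, (Nat.succ_pred_eq_of_pos (by omega)).symm⟩
    show myconv k H (LinearMap.id - myunit k H) (Ppow k H m) x = 0
    have := comul_mem_ker 𝒜 hcomul n hx
      (LinearMap.mul' k H ∘ₗ TensorProduct.map (LinearMap.id - myunit k H) (Ppow k H m))
      (fun i j hij a ha b hb => by
        simp only [LinearMap.comp_apply, TensorProduct.map_tmul, LinearMap.mul'_apply]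
        rcases Nat.eq_zero_or_pos i with hi | hi
        · subst hi
          rw [N_vanish 𝒜 hconn ha, zero_mul]
        · have hj : j < n := by omega
          rw [ih j hj m (by omega) b hb, mul_zero])
    simpa [myconv, LinearMap.comp_apply] using this
end Aux

/-- A connected graded bialgebra over a field admits an antipode: if `H`
is a `k`-bialgebra with a grading `𝒜 : ℕ → Submodule k H` (internal direct sum,
`𝒜 i · 𝒜 j ⊆ 𝒜 (i+j)`, `Δ(𝒜 n) ⊆ ∑_{i+j=n} 𝒜 i ⊗ 𝒜 j`, `𝒜 0 = k·1`), then there is a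
`k`-linear map `S : H → H` with `m ∘ (S ⊗ id) ∘ Δ = η ∘ ε = m ∘ (id ⊗ S) ∘ Δ`, making `H`
a Hopf algebra. -/
theorem connected_graded_bialgebra_has_antipode
    (k H : Type) [Field k] [Ring H] [Bialgebra k H]
    (𝒜 : ℕ → Submodule k H)
    (hdecomp : DirectSum.IsInternal 𝒜)
    (hmul : ∀ i j : ℕ, 𝒜 i * 𝒜 j ≤ 𝒜 (i + j))
    (hcomul : ∀ n : ℕ,
      (𝒜 n).map (Coalgebra.comul (R := k) (A := H)) ≤
        ⨆ (p : ℕ × ℕ) (_ : p.1 + p.2 = n),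
          Submodule.map₂ (TensorProduct.mk k H H) (𝒜 p.1) (𝒜 p.2))
    (hconn : 𝒜 0 = Submodule.span k {(1 : H)}) :
    ∃ S : H →ₗ[k] H,
      LinearMap.mul' k H ∘ₗ TensorProduct.map S LinearMap.id ∘ₗ Coalgebra.comul (R := k) =
        Algebra.linearMap k H ∘ₗ Coalgebra.counit (R := k) ∧
      LinearMap.mul' k H ∘ₗ TensorProduct.map LinearMap.id S ∘ₗ Coalgebra.comul (R := k) =
        Algebra.linearMap k H ∘ₗ Coalgebra.counit (R := k) := by
  classical
  set N : H →ₗ[k] H := LinearMap.id - myunit k H with hN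
  set P : ℕ → H →ₗ[k] H := Ppow k H with hP
  set e : (⨁ n, 𝒜 n) ≃ₗ[k] H :=
    LinearEquiv.ofBijective (DirectSum.coeLinearMap 𝒜) hdecomp with he
  set SS : H →ₗ[k] H :=
    (DirectSum.toModule k ℕ H fun n =>
      (∑ m ∈ Finset.range (n + 1), ((-1 : k) ^ m) • P m) ∘ₗ (𝒜 n).subtype) ∘ₗ
      (e.symm : H →ₗ[k] (⨁ n, 𝒜 n)) with hSS
  have hvan := Ppow_vanish 𝒜 hcomul hconn
  -- formula for SS on each graded piece
  have hS : ∀ (n : ℕ) (x : H), x ∈ 𝒜 n →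
      SS x = ∑ m ∈ Finset.range (n + 1), ((-1 : k) ^ m) • P m x := by
    intro n x hx
    have h1 : e.symm x = DirectSum.of (fun n => 𝒜 n) n ⟨x, hx⟩ := by
      rw [LinearEquiv.symm_apply_eq, he]
      exact (DirectSum.coeLinearMap_of (R := k) (A := 𝒜) n ⟨x, hx⟩).symm
    rw [hSS]
    simp only [LinearMap.comp_apply, LinearEquiv.coe_coe, h1]
    rw [← DirectSum.lof_eq_of k, DirectSum.toModule_lof]
    simp [LinearMap.sum_apply]
  -- extended formula
  have hS' : ∀ (n M : ℕ), n ≤ M → ∀ x ∈ 𝒜 n,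
      SS x = ∑ m ∈ Finset.range (M + 1), ((-1 : k) ^ m) • P m x := by
    intro n M hnM x hx
    rw [hS n x hx]
    refine Finset.sum_subset (Finset.range_subset_range.2 (by omega)) fun m hm hm' => ?_
    have hnm : n < m := by
      simp only [Finset.mem_range] at hm hm'; omega
    rw [hvan n m hnm x hx, smul_zero]
  -- telescoping computation, given S_n replaced and conv with N computed
  have telescope : ∀ (n : ℕ) (x : H), x ∈ 𝒜 n →
      (∑ m ∈ Finset.range (n + 1), ((-1 : k) ^ m) • P m x) +
        (∑ m ∈ Finset.range (n + 1), ((-1 : k) ^ m) • P (m + 1) x) = myunit k H x := by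
    intro n x hx
    set F : ℕ → H := fun m => ((-1 : k) ^ m) • P m x with hF
    have h2 : ∀ m, ((-1 : k) ^ m) • P (m + 1) x = -F (m + 1) := by
      intro m
      simp [hF, pow_succ, mul_smul]
    simp_rw [h2]
    rw [Finset.sum_neg_distrib]
    have e1 : ∑ m ∈ Finset.range (n + 2), F m
        = (∑ m ∈ Finset.range (n + 1), F (m + 1)) + F 0 := Finset.sum_range_succ' F (n + 1)
    have e2 : ∑ m ∈ Finset.range (n + 2), F m
        = (∑ m ∈ Finset.range (n + 1), F m) + F (n + 1) := Finset.sum_range_succ F (n + 1)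
    have e3 : F (n + 1) = 0 := by
      simp [hF, hP, hvan n (n + 1) (by omega) x hx]
    have e4 : F 0 = myunit k H x := by
      rw [hF]; simp only [pow_zero, one_smul]; rw [hP]; rfl
    have e5 : ∑ m ∈ Finset.range (n + 1), F (m + 1)
        = (∑ m ∈ Finset.range (n + 1), F m) - F 0 := by
      rw [e2, e3, add_zero] at e1
      rw [e1]; abel
    rw [e5, ← e4]; abel
  -- the two main identities on each graded piece
  have main₂ : ∀ (n : ℕ) (x : H), x ∈ 𝒜 n →
      myconv k H LinearMap.id SS x = myunit k H x := by
    intro n x hx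
    set Sn : H →ₗ[k] H := ∑ m ∈ Finset.range (n + 1), ((-1 : k) ^ m) • P m with hSn
    have stepA : myconv k H LinearMap.id SS x = myconv k H LinearMap.id Sn x := by
      have hD := comul_mem_ker 𝒜 hcomul n hx
        (LinearMap.mul' k H ∘ₗ TensorProduct.map LinearMap.id SS
          - LinearMap.mul' k H ∘ₗ TensorProduct.map LinearMap.id Sn)
        (fun i j hij a ha b hb => by
          simp only [LinearMap.sub_apply, LinearMap.comp_apply, TensorProduct.map_tmul,
            LinearMap.mul'_apply, LinearMap.id_coe, id_eq]
          have hb' : SS b = Sn b := by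
            rw [hS' j n (by omega) b hb, hSn]
            simp [LinearMap.sum_apply]
          rw [hb', sub_self])
      simpa [myconv, LinearMap.sub_apply, LinearMap.comp_apply, sub_eq_zero] using hD
    rw [stepA]
    have split : myconv k H LinearMap.id Sn
        = myconv k H (myunit k H) Sn + myconv k H N Sn := by
      rw [← myconv_add_left]
      congr 1
      rw [hN, add_sub_cancel]
    rw [split, myconv_unit_left]
    have convN : myconv k H N Sn
        = ∑ m ∈ Finset.range (n + 1), ((-1 : k) ^ m) • P (m + 1) := by
      rw [hSn, myconv_sum_right]
      rfl
    rw [LinearMap.add_apply, convN, hSn]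
    simp only [LinearMap.sum_apply, LinearMap.smul_apply]
    exact telescope n x hx
  have main₁ : ∀ (n : ℕ) (x : H), x ∈ 𝒜 n →
      myconv k H SS LinearMap.id x = myunit k H x := by
    intro n x hx
    set Sn : H →ₗ[k] H := ∑ m ∈ Finset.range (n + 1), ((-1 : k) ^ m) • P m with hSn
    have stepA : myconv k H SS LinearMap.id x = myconv k H Sn LinearMap.id x := by
      have hD := comul_mem_ker 𝒜 hcomul n hx
        (LinearMap.mul' k H ∘ₗ TensorProduct.map SS LinearMap.id
          - LinearMap.mul' k H ∘ₗ TensorProduct.map Sn LinearMap.id)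
        (fun i j hij a ha b hb => by
          simp only [LinearMap.sub_apply, LinearMap.comp_apply, TensorProduct.map_tmul,
            LinearMap.mul'_apply, LinearMap.id_coe, id_eq]
          have ha' : SS a = Sn a := by
            rw [hS' i n (by omega) a ha, hSn]
            simp [LinearMap.sum_apply]
          rw [ha', sub_self])
      simpa [myconv, LinearMap.sub_apply, LinearMap.comp_apply, sub_eq_zero] using hD
    rw [stepA]
    have split : myconv k H Sn LinearMap.id
        = myconv k H Sn (myunit k H) + myconv k H Sn N := by
      rw [← myconv_add_right]
      congr 1
      rw [hN, add_sub_cancel]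
    rw [split, myconv_unit_right]
    have convN : myconv k H Sn N
        = ∑ m ∈ Finset.range (n + 1), ((-1 : k) ^ m) • P (m + 1) := by
      rw [hSn, myconv_sum_left]
      refine Finset.sum_congr rfl fun m _ => ?_
      rw [hN, hP, myconv_Ppow]
    rw [LinearMap.add_apply, convN, hSn]
    simp only [LinearMap.sum_apply, LinearMap.smul_apply]
    exact telescope n x hx
  -- assemble
  refine ⟨SS, ?_, ?_⟩
  · show myconv k H SS LinearMap.id = myunit k H
    ext x
    have hx : x ∈ iSup 𝒜 := by rw [hdecomp.submodule_iSup_eq_top]; trivial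
    refine Submodule.iSup_induction 𝒜 (motive := fun y => myconv k H SS LinearMap.id y = myunit k H y)
      hx (fun n y hy => main₁ n y hy) (by simp) (fun y z hy hz => by
        simp only [map_add]; exact congrArg₂ (· + ·) hy hz)
  · show myconv k H LinearMap.id SS = myunit k H
    ext x
    have hx : x ∈ iSup 𝒜 := by rw [hdecomp.submodule_iSup_eq_top]; trivial
    refine Submodule.iSup_induction 𝒜 (motive := fun y => myconv k H LinearMap.id SS y = myunit k H y)
      hx (fun n y hy => main₂ n y hy) (by simp) (fun y z hy hz => by
        simp only [map_add]; exact congrArg₂ (· + ·) hy hz)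
end

section
/- Fix k ≥ 1 and N ≥ 1, with R = ℂ[[λ_1,…,λ_k,φ_1,…,φ_N]] and the group G = { Ψ_{f,w} } of substitution automorphisms λ_i ↦ f_i, φ_j ↦ w_j·φ_j as above (f ∈ D_k, each w_j ∈ ℂ[[λ_1,…,λ_k]] with constant coefficient 1). Then: (1) the subset N₀ := { Ψ_{f,w} ∈ G : f_i = λ_i for all i } is a normal subgroup of G, and the map w ↦ Ψ_{id,w} is a group isomorphism from the direct product of N copies of the multiplicative group of power series in ℂ[[λ_1,…,λ_k]] with constant coefficient 1 (a subgroup of the units ℂ[[λ_1,…,λ_k]]^×) onto N₀; (2) the assignment Ψ_{f,w} ↦ f is a surjective group homomorphism from G onto the opposite group of D_k with kernel N₀, and it is split by f ↦ Ψ_{f,(1,…,1)}; consequently G is isomorphic to the semidirect product N₀ ⋊ D_k^{op}. (This is the statement that the renormalization group of transformations of fields and coupling constants is the semidirect product (ℂ[[λ_1,…,λ_k]]^×)^N ⋊ Diff(ℂ^k,0), with the invertible series acting as wave function renormalization and the diffeomorphisms acting on the coupling constants.) -/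
/-- Substitution of multivariate formal power series: `mvSubst a f` is
`f(a₁, …)`, i.e. `∑_e (coeff e f) · ∏ᵢ (a i)^(e i)`.  When every `a i` has zero constant
coefficient, only exponents `e` of total degree at most the total degree of `d`
contribute to the coefficient at `d`, so the following finite sum computes the
substitution. -/
noncomputable def mvSubst {σ τ : Type} [Fintype σ] [DecidableEq σ]
    (a : σ → MvPowerSeries τ ℂ) (f : MvPowerSeries σ ℂ) : MvPowerSeries τ ℂ :=
  fun d =>
    ∑ e ∈ Finset.Iic (Finsupp.equivFunOnFinite.symm fun _ : σ => d.sum fun _ n => n),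
      MvPowerSeries.coeff e f * MvPowerSeries.coeff d (e.prod fun i n => a i ^ n)

namespace RenGp
set_option linter.unusedSectionVars false

variable {σ τ : Type} [Fintype σ] [DecidableEq σ]

/-- total degree of a monomial exponent -/
def degS {α : Type} (d : α →₀ ℕ) : ℕ := d.sum fun _ n => n

lemma degS_add {α : Type} (d e : α →₀ ℕ) : degS (d + e) = degS d + degS e := by
  classical
  simpa [degS] using Finsupp.sum_add_index' (by simp) (by simp) (f := d) (g := e)
    (h := fun (_ : α) (n : ℕ) => n)

lemma le_degS {α : Type} (d : α →₀ ℕ) (i : α) : d i ≤ degS d := by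
  classical
  by_cases h : d i = 0
  · simp [h]
  · exact Finset.single_le_sum (f := fun j => d j) (fun _ _ => Nat.zero_le _)
      (Finsupp.mem_support_iff.mpr h)

lemma degS_le_of_le {α : Type} {d e : α →₀ ℕ} (h : d ≤ e) : degS d ≤ degS e := by
  obtain ⟨c, rfl⟩ := le_iff_exists_add.mp h
  simp [degS_add]

lemma one_le_degS {α : Type} {d : α →₀ ℕ} (h : d ≠ 0) : 1 ≤ degS d := by
  rcases Finsupp.ne_iff.mp h with ⟨i, hi⟩
  simp only [Finsupp.coe_zero, Pi.zero_apply] at hi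
  calc 1 ≤ d i := Nat.one_le_iff_ne_zero.mpr hi
  _ ≤ degS d := le_degS d i

/-- the bound tuple appearing in `mvSubst` -/
noncomputable def dB (d : τ →₀ ℕ) : σ →₀ ℕ := Finsupp.equivFunOnFinite.symm fun _ : σ => degS d

lemma mem_Iic_dB {d : τ →₀ ℕ} {e : σ →₀ ℕ} :
    e ∈ Finset.Iic (dB d) ↔ ∀ i, e i ≤ degS d := by
  simp [dB, Finsupp.le_def]

lemma degS_le_card_mul {d : τ →₀ ℕ} {e : σ →₀ ℕ} (h : e ∈ Finset.Iic (dB d)) :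
    degS e ≤ Fintype.card σ * degS d := by
  rw [mem_Iic_dB] at h
  have : degS e = ∑ i : σ, e i := by
    rw [degS, Finsupp.sum_fintype]; simp
  rw [this]
  calc ∑ i : σ, e i ≤ ∑ _i : σ, degS d := Finset.sum_le_sum fun i _ => h i
  _ = Fintype.card σ * degS d := by simp [Finset.sum_const, mul_comm]

lemma coeff_mvSubst (a : σ → MvPowerSeries τ ℂ) (f : MvPowerSeries σ ℂ) (d : τ →₀ ℕ) :
    MvPowerSeries.coeff d (mvSubst a f) =
      ∑ e ∈ Finset.Iic (dB (σ := σ) d),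
        MvPowerSeries.coeff e f * MvPowerSeries.coeff d (e.prod fun i n => a i ^ n) := by
  rfl

/-- coefficients of the substitution at `d` only depend on coefficients of `f` in the box -/
lemma coeff_mvSubst_congr (a : σ → MvPowerSeries τ ℂ) {f g : MvPowerSeries σ ℂ} (d : τ →₀ ℕ)
    (h : ∀ e ∈ Finset.Iic (dB (σ := σ) d),
      MvPowerSeries.coeff e f = MvPowerSeries.coeff e g) :
    MvPowerSeries.coeff d (mvSubst a f) = MvPowerSeries.coeff d (mvSubst a g) := by
  rw [coeff_mvSubst, coeff_mvSubst]
  exact Finset.sum_congr rfl fun e he => by rw [h e he]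


variable [DecidableEq τ]

/-- `p` has order at least `n`. -/
def OrdGe (n : ℕ) (p : MvPowerSeries τ ℂ) : Prop :=
  ∀ d : τ →₀ ℕ, degS d < n → MvPowerSeries.coeff d p = 0

lemma ordGe_zero (p : MvPowerSeries τ ℂ) : OrdGe 0 p := fun _ h => absurd h (Nat.not_lt_zero _)

lemma ordGe_one {p : MvPowerSeries τ ℂ} (h : MvPowerSeries.constantCoeff p = 0) :
    OrdGe 1 p := by
  intro d hd
  have : d = 0 := by
    ext i
    have h1 := le_degS d i
    simp only [Finsupp.coe_zero, Pi.zero_apply]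
    omega
  subst this
  rw [MvPowerSeries.coeff_zero_eq_constantCoeff]
  exact h

lemma OrdGe.mul {m n : ℕ} {p q : MvPowerSeries τ ℂ} (hp : OrdGe m p) (hq : OrdGe n q) :
    OrdGe (m + n) (p * q) := by
  intro d hd
  rw [MvPowerSeries.coeff_mul]
  apply Finset.sum_eq_zero
  rintro ⟨d1, d2⟩ hmem
  rw [Finset.HasAntidiagonal.mem_antidiagonal] at hmem
  have hsum : degS d1 + degS d2 = degS d := by rw [← degS_add, hmem]
  rcases Nat.lt_or_ge (degS d1) m with h1 | h1
  · rw [hp d1 h1, zero_mul]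
  · have : degS d2 < n := by omega
    rw [hq d2 this, mul_zero]

lemma OrdGe.pow {p : MvPowerSeries τ ℂ} (hp : OrdGe 1 p) (n : ℕ) : OrdGe n (p ^ n) := by
  induction n with
  | zero => exact ordGe_zero _
  | succ k ih => rw [pow_succ]; exact ih.mul hp

lemma ordGe_prodPow {a : σ → MvPowerSeries τ ℂ}
    (ha : ∀ i, MvPowerSeries.constantCoeff (a i) = 0) (e : σ →₀ ℕ) :
    OrdGe (degS e) (e.prod fun i n => a i ^ n) := by
  induction e using Finsupp.induction with
  | zero =>
    intro d hd
    simp [degS] at hd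
  | single_add i m e hie hm ih =>
    rw [Finsupp.prod_add_index' (by intro j; exact pow_zero _) (by intro j m n; exact pow_add _ _ _),
      Finsupp.prod_single_index (h := fun j n => a j ^ n) (pow_zero (a i)), degS_add]
    have h1 : degS (Finsupp.single i m) = m := by simp [degS, Finsupp.sum_single_index]
    rw [h1]
    exact ((ordGe_one (ha i)).pow m).mul ih

lemma coeff_prodPow_eq_zero {a : σ → MvPowerSeries τ ℂ}
    (ha : ∀ i, MvPowerSeries.constantCoeff (a i) = 0) {e : σ →₀ ℕ} {d : τ →₀ ℕ}
    (h : degS d < degS e) :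
    MvPowerSeries.coeff d (e.prod fun i n => a i ^ n) = 0 :=
  ordGe_prodPow ha e d h

/-- polynomial truncation of a power series to the box `Iic (dB d)` at level `n` -/
noncomputable def truncP (n : ℕ) (f : MvPowerSeries σ ℂ) : MvPolynomial σ ℂ :=
  ∑ e ∈ Finset.Iic (Finsupp.equivFunOnFinite.symm fun _ : σ => n),
    MvPolynomial.monomial e (MvPowerSeries.coeff e f)

lemma coeff_truncP (n : ℕ) (f : MvPowerSeries σ ℂ) (e : σ →₀ ℕ) :
    MvPolynomial.coeff e (truncP n f) =
      if ∀ i, e i ≤ n then MvPowerSeries.coeff e f else 0 := by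
  rw [truncP, MvPolynomial.coeff_sum]
  simp only [MvPolynomial.coeff_monomial]
  rw [Finset.sum_ite_eq' (Finset.Iic (Finsupp.equivFunOnFinite.symm fun _ : σ => n)) e]
  congr 1
  simp [Finsupp.le_def]

lemma coeff_truncP_of_le {n : ℕ} {e : σ →₀ ℕ} (f : MvPowerSeries σ ℂ) (h : ∀ i, e i ≤ n) :
    MvPolynomial.coeff e (truncP n f) = MvPowerSeries.coeff e f := by
  rw [coeff_truncP, if_pos h]

/-- Master lemma: `mvSubst` of (the coercion of) a polynomial is `aeval`. -/
lemma mvSubst_coe {a : σ → MvPowerSeries τ ℂ}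
    (ha : ∀ i, MvPowerSeries.constantCoeff (a i) = 0) (P : MvPolynomial σ ℂ) :
    mvSubst a ↑P = MvPolynomial.aeval a P := by
  ext d
  rw [coeff_mvSubst]
  have hrhs : MvPowerSeries.coeff d (MvPolynomial.aeval a P) =
      ∑ e ∈ P.support,
        MvPowerSeries.coeff e (↑P : MvPowerSeries σ ℂ) *
          MvPowerSeries.coeff d (e.prod fun i n => a i ^ n) := by
    conv_lhs => rw [P.as_sum]
    rw [map_sum, map_sum]
    refine Finset.sum_congr rfl fun e _ => ?_
    rw [MvPolynomial.aeval_monomial, MvPolynomial.coeff_coe,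
      ← MvPowerSeries.c_eq_algebraMap, MvPowerSeries.coeff_C_mul]
  rw [hrhs]
  set E := Finset.Iic (dB (σ := σ) d) ∪ P.support with hE
  have h1 : ∑ e ∈ Finset.Iic (dB (σ := σ) d), MvPowerSeries.coeff e (↑P : MvPowerSeries σ ℂ) *
      MvPowerSeries.coeff d (e.prod fun i n => a i ^ n) =
      ∑ e ∈ E, MvPowerSeries.coeff e (↑P : MvPowerSeries σ ℂ) *
      MvPowerSeries.coeff d (e.prod fun i n => a i ^ n) := by
    refine Finset.sum_subset Finset.subset_union_left fun e _ he => ?_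
    have : ∃ i, ¬ e i ≤ degS d := by
      by_contra hc
      push_neg at hc
      exact he (mem_Iic_dB.mpr hc)
    obtain ⟨i, hi⟩ := this
    have : degS d < degS e := lt_of_lt_of_le (Nat.lt_of_not_le hi) (le_degS e i)
    rw [coeff_prodPow_eq_zero ha this, mul_zero]
  have h2 : ∑ e ∈ P.support, MvPowerSeries.coeff e (↑P : MvPowerSeries σ ℂ) *
      MvPowerSeries.coeff d (e.prod fun i n => a i ^ n) =
      ∑ e ∈ E, MvPowerSeries.coeff e (↑P : MvPowerSeries σ ℂ) *
      MvPowerSeries.coeff d (e.prod fun i n => a i ^ n) := by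
    refine Finset.sum_subset Finset.subset_union_right fun e _ he => ?_
    rw [MvPolynomial.coeff_coe, MvPolynomial.notMem_support_iff.mp he, zero_mul]
  rw [h1, h2]

lemma coeff_mvSubst_truncP {a : σ → MvPowerSeries τ ℂ}
    (ha : ∀ i, MvPowerSeries.constantCoeff (a i) = 0) (f : MvPowerSeries σ ℂ)
    {d : τ →₀ ℕ} {M : ℕ} (hM : degS d ≤ M) :
    MvPowerSeries.coeff d (mvSubst a f) =
      MvPowerSeries.coeff d (MvPolynomial.aeval a (truncP M f)) := by
  rw [← mvSubst_coe ha]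
  refine coeff_mvSubst_congr a d fun e he => ?_
  rw [MvPolynomial.coeff_coe, coeff_truncP_of_le]
  intro i
  exact le_trans (mem_Iic_dB.mp he i) hM

lemma mvSubst_add (a : σ → MvPowerSeries τ ℂ) (f g : MvPowerSeries σ ℂ) :
    mvSubst a (f + g) = mvSubst a f + mvSubst a g := by
  ext d
  rw [map_add, coeff_mvSubst, coeff_mvSubst, coeff_mvSubst, ← Finset.sum_add_distrib]
  refine Finset.sum_congr rfl fun e _ => ?_
  rw [map_add, add_mul]

lemma mvSubst_zero (a : σ → MvPowerSeries τ ℂ) : mvSubst a 0 = 0 := by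
  ext d
  rw [coeff_mvSubst, map_zero]
  exact Finset.sum_eq_zero fun e _ => by rw [map_zero, zero_mul]

lemma mvSubst_mul {a : σ → MvPowerSeries τ ℂ}
    (ha : ∀ i, MvPowerSeries.constantCoeff (a i) = 0) (f g : MvPowerSeries σ ℂ) :
    mvSubst a (f * g) = mvSubst a f * mvSubst a g := by
  ext d
  set n := degS d with hn
  set P := truncP n f with hP
  set Q := truncP n g with hQ
  have key : MvPowerSeries.coeff d (mvSubst a (f * g)) =
      MvPowerSeries.coeff d (MvPolynomial.aeval a P * MvPolynomial.aeval a Q) := by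
    have h1 : MvPowerSeries.coeff d (mvSubst a (f * g)) =
        MvPowerSeries.coeff d (mvSubst a ↑(P * Q)) := by
      refine coeff_mvSubst_congr a d fun e he => ?_
      rw [MvPolynomial.coe_mul, MvPowerSeries.coeff_mul, MvPowerSeries.coeff_mul]
      refine Finset.sum_congr rfl fun p hp => ?_
      rw [Finset.HasAntidiagonal.mem_antidiagonal] at hp
      have hle1 : p.1 ≤ e := le_of_le_of_eq (self_le_add_right p.1 p.2) hp
      have hle2 : p.2 ≤ e := le_of_le_of_eq (self_le_add_left p.2 p.1) hp
      have hp1 : ∀ i, p.1 i ≤ n := fun i =>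
        le_trans (Finsupp.le_def.mp hle1 i) (mem_Iic_dB.mp he i)
      have hp2 : ∀ i, p.2 i ≤ n := fun i =>
        le_trans (Finsupp.le_def.mp hle2 i) (mem_Iic_dB.mp he i)
      rw [MvPolynomial.coeff_coe, MvPolynomial.coeff_coe,
        coeff_truncP_of_le f hp1, coeff_truncP_of_le g hp2]
    rw [h1, mvSubst_coe ha, map_mul]
  rw [key, MvPowerSeries.coeff_mul, MvPowerSeries.coeff_mul]
  refine (Finset.sum_congr rfl fun p hp => ?_).symm
  rw [Finset.HasAntidiagonal.mem_antidiagonal] at hp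
  have h1 : degS p.1 ≤ n := by
    rw [hn, ← hp]; exact degS_le_of_le (self_le_add_right p.1 p.2)
  have h2 : degS p.2 ≤ n := by
    rw [hn, ← hp]; exact degS_le_of_le (self_le_add_left p.2 p.1)
  rw [coeff_mvSubst_truncP ha f h1, coeff_mvSubst_truncP ha g h2]

lemma mvSubst_one {a : σ → MvPowerSeries τ ℂ}
    (ha : ∀ i, MvPowerSeries.constantCoeff (a i) = 0) : mvSubst a 1 = 1 := by
  have := mvSubst_coe ha 1
  rwa [MvPolynomial.coe_one, map_one] at this

lemma mvSubst_algebraMap {a : σ → MvPowerSeries τ ℂ}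
    (ha : ∀ i, MvPowerSeries.constantCoeff (a i) = 0) (c : ℂ) :
    mvSubst a (algebraMap ℂ (MvPowerSeries σ ℂ) c) = algebraMap ℂ (MvPowerSeries τ ℂ) c := by
  have := mvSubst_coe ha (MvPolynomial.C c)
  rwa [MvPolynomial.coe_C, MvPolynomial.aeval_C, ← MvPowerSeries.c_eq_algebraMap] at this

/-- substitution as an algebra homomorphism -/
noncomputable def substAlgHom {a : σ → MvPowerSeries τ ℂ}
    (ha : ∀ i, MvPowerSeries.constantCoeff (a i) = 0) :
    MvPowerSeries σ ℂ →ₐ[ℂ] MvPowerSeries τ ℂ where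
  toFun := mvSubst a
  map_one' := mvSubst_one ha
  map_mul' := mvSubst_mul ha
  map_zero' := mvSubst_zero a
  map_add' := mvSubst_add a
  commutes' := mvSubst_algebraMap ha

@[simp] lemma substAlgHom_apply {a : σ → MvPowerSeries τ ℂ}
    (ha : ∀ i, MvPowerSeries.constantCoeff (a i) = 0) (f : MvPowerSeries σ ℂ) :
    substAlgHom ha f = mvSubst a f := rfl

lemma mvSubst_X {a : σ → MvPowerSeries τ ℂ}
    (ha : ∀ i, MvPowerSeries.constantCoeff (a i) = 0) (s : σ) :
    mvSubst a (MvPowerSeries.X s) = a s := by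
  have := mvSubst_coe ha (MvPolynomial.X s)
  rwa [MvPolynomial.coe_X, MvPolynomial.aeval_X] at this

lemma constantCoeff_mvSubst (a : σ → MvPowerSeries τ ℂ) (f : MvPowerSeries σ ℂ) :
    MvPowerSeries.constantCoeff (mvSubst a f) = MvPowerSeries.constantCoeff f := by
  rw [← MvPowerSeries.coeff_zero_eq_constantCoeff_apply, ← MvPowerSeries.coeff_zero_eq_constantCoeff_apply,
    coeff_mvSubst]
  have hd : degS (0 : τ →₀ ℕ) = 0 := by simp [degS]
  have hIic : Finset.Iic (dB (σ := σ) (0: τ →₀ ℕ)) = {0} := by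
    have h0 : dB (σ := σ) (0 : τ →₀ ℕ) = 0 := by
      ext i; simp [dB, degS]
    rw [h0]
    ext e
    simp [Finset.mem_Iic, le_zero_iff]
  rw [hIic, Finset.sum_singleton, Finsupp.prod_zero_index]
  rw [MvPowerSeries.coeff_one]
  simp

lemma mvSubst_id (f : MvPowerSeries σ ℂ) :
    mvSubst (fun s => MvPowerSeries.X s) f = f := by
  have hX : ∀ i : σ, MvPowerSeries.constantCoeff (MvPowerSeries.X (R := ℂ) i) = 0 :=
    fun i => MvPowerSeries.constantCoeff_X i
  ext d
  have hd : degS d ≤ degS d := le_refl _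
  rw [coeff_mvSubst_truncP hX f hd]
  have : MvPolynomial.aeval (fun s : σ => MvPowerSeries.X (R := ℂ) s) (truncP (degS d) f) =
      ((truncP (degS d) f : MvPolynomial σ ℂ) : MvPowerSeries σ ℂ) := by
    have hcomp : (MvPolynomial.aeval (R := ℂ) (fun s : σ => MvPowerSeries.X (R := ℂ) s)) =
        MvPolynomial.coeToMvPowerSeries.algHom (σ := σ) ℂ := by
      refine MvPolynomial.algHom_ext fun s => ?_
      simp [MvPolynomial.coeToMvPowerSeries.algHom_apply]
    rw [hcomp]
    simp [MvPolynomial.coeToMvPowerSeries.algHom_apply]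
  rw [this, MvPolynomial.coeff_coe, coeff_truncP_of_le]
  exact fun i => le_degS d i

lemma mvSubst_comp {a : σ → MvPowerSeries τ ℂ} {b : σ → MvPowerSeries σ ℂ}
    (ha : ∀ i, MvPowerSeries.constantCoeff (a i) = 0)
    (hb : ∀ i, MvPowerSeries.constantCoeff (b i) = 0) (f : MvPowerSeries σ ℂ) :
    mvSubst a (mvSubst b f) = mvSubst (fun s => mvSubst a (b s)) f := by
  have hc : ∀ i, MvPowerSeries.constantCoeff (mvSubst a (b i)) = 0 := by
    intro i
    rw [constantCoeff_mvSubst]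
    exact hb i
  ext d
  set M := (Fintype.card σ + 1) * degS d with hM
  have hdM : degS d ≤ M := by
    rw [hM]; nlinarith [Nat.zero_le (Fintype.card σ * degS d)]
  set P := truncP M f with hPdef
  have step1 : MvPowerSeries.coeff d (mvSubst a (mvSubst b f)) =
      MvPowerSeries.coeff d (mvSubst a (mvSubst b ↑P)) := by
    refine coeff_mvSubst_congr a d fun e he => ?_
    refine coeff_mvSubst_congr b e fun e' he' => ?_
    rw [MvPolynomial.coeff_coe, coeff_truncP_of_le]
    intro i
    calc e' i ≤ degS e := le_trans (mem_Iic_dB.mp he' i) (le_refl _)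
    _ ≤ Fintype.card σ * degS d := degS_le_card_mul he
    _ ≤ M := by rw [hM]; nlinarith [Nat.zero_le (degS d)]
  have step2 : mvSubst a (mvSubst b ↑P) = MvPolynomial.aeval (fun s => mvSubst a (b s)) P := by
    rw [mvSubst_coe hb]
    have : mvSubst a (MvPolynomial.aeval b P) = (substAlgHom ha) (MvPolynomial.aeval b P) := rfl
    rw [this, ← AlgHom.comp_apply]
    have hcomp : (substAlgHom ha).comp (MvPolynomial.aeval b) =
        MvPolynomial.aeval (fun s => mvSubst a (b s)) := by
      refine MvPolynomial.algHom_ext fun s => ?_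
      simp [MvPolynomial.aeval_X]
    rw [hcomp]
  rw [step1, step2, ← mvSubst_coe hc]
  refine (coeff_mvSubst_congr _ d fun e he => ?_).symm
  rw [MvPolynomial.coeff_coe, coeff_truncP_of_le]
  intro i
  exact le_trans (mem_Iic_dB.mp he i) hdM

end RenGp

/-- `R = ℂ[[λ₁,…,λ_k,φ₁,…,φ_N]]`. -/
abbrev Rkn (k N : ℕ) : Type := MvPowerSeries (Fin k ⊕ Fin N) ℂ

/-- A series in `R` involves only the `λ`-variables. -/
def OnlyLambda {k N : ℕ} (p : Rkn k N) : Prop :=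
  ∀ d : (Fin k ⊕ Fin N) →₀ ℕ, (∃ j : Fin N, d (Sum.inr j) ≠ 0) →
    MvPowerSeries.coeff d p = 0

/-- `f ∈ D_k`: a `k`-tuple of series in the `λ`-variables only, with `fᵢ = λᵢ·uᵢ`, `uᵢ`
of constant coefficient `1`. -/
def IsDkTuple {k N : ℕ} (f : Fin k → Rkn k N) : Prop :=
  ∀ i : Fin k, OnlyLambda (f i) ∧ ∃ u : Rkn k N,
    f i = MvPowerSeries.X (Sum.inl i) * u ∧ MvPowerSeries.constantCoeff u = 1

/-- `w`: an `N`-tuple of series in the `λ`-variables only, each of constant coeff `1`. -/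
def IsWTuple {k N : ℕ} (w : Fin N → Rkn k N) : Prop :=
  ∀ j : Fin N, OnlyLambda (w j) ∧ MvPowerSeries.constantCoeff (w j) = 1

/-- The substitution data of `Ψ_{f,w}`: `λᵢ ↦ fᵢ`, `φⱼ ↦ wⱼ·φⱼ`. -/
noncomputable def subMap {k N : ℕ} (f : Fin k → Rkn k N) (w : Fin N → Rkn k N) :
    Fin k ⊕ Fin N → Rkn k N :=
  Sum.elim f fun j => w j * MvPowerSeries.X (Sum.inr j)

/-- `ψ` is one of the renormalization substitution automorphisms `Ψ_{f,w}`. -/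
def IsPsi {k N : ℕ} (ψ : Rkn k N ≃ₐ[ℂ] Rkn k N) : Prop :=
  ∃ (f : Fin k → Rkn k N) (w : Fin N → Rkn k N), IsDkTuple f ∧ IsWTuple w ∧
    ∀ g : Rkn k N, ψ g = mvSubst (subMap f w) g

/-- `ψ = Ψ_{f,w}` with `f` the identity tuple (`fᵢ = λᵢ`): pure wave function
renormalization. -/
def IsPsiId {k N : ℕ} (ψ : Rkn k N ≃ₐ[ℂ] Rkn k N) : Prop :=
  ∃ w : Fin N → Rkn k N, IsWTuple w ∧
    ∀ g : Rkn k N, ψ g = mvSubst (subMap (fun i => MvPowerSeries.X (Sum.inl i)) w) g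

/-- `ψ = Ψ_{f,1}`: a pure formal diffeomorphism of the coupling constants. -/
def IsPsiDiff {k N : ℕ} (ψ : Rkn k N ≃ₐ[ℂ] Rkn k N) : Prop :=
  ∃ f : Fin k → Rkn k N, IsDkTuple f ∧
    ∀ g : Rkn k N, ψ g = mvSubst (subMap f fun _ => (1 : Rkn k N)) g

namespace RenGp

variable {k N : ℕ}

lemma onlyLambda_one : OnlyLambda (1 : Rkn k N) := by
  intro d ⟨j, hj⟩
  rw [MvPowerSeries.coeff_one, if_neg]
  intro h
  subst h
  simp at hj

lemma onlyLambda_sub {p q : Rkn k N} (hp : OnlyLambda p) (hq : OnlyLambda q) :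
    OnlyLambda (p - q) := by
  intro d hd
  rw [map_sub, hp d hd, hq d hd, sub_zero]

lemma onlyLambda_mul {p q : Rkn k N} (hp : OnlyLambda p) (hq : OnlyLambda q) :
    OnlyLambda (p * q) := by
  intro d ⟨j, hj⟩
  rw [MvPowerSeries.coeff_mul]
  apply Finset.sum_eq_zero
  rintro ⟨d1, d2⟩ hmem
  rw [Finset.HasAntidiagonal.mem_antidiagonal] at hmem
  have : d1 (Sum.inr j) ≠ 0 ∨ d2 (Sum.inr j) ≠ 0 := by
    have : d1 (Sum.inr j) + d2 (Sum.inr j) = d (Sum.inr j) := by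
      rw [← hmem]; simp
    omega
  rcases this with h | h
  · rw [hp d1 ⟨j, h⟩, zero_mul]
  · rw [hq d2 ⟨j, h⟩, mul_zero]

lemma onlyLambda_pow {p : Rkn k N} (hp : OnlyLambda p) (n : ℕ) (hn : 1 ≤ n) :
    OnlyLambda (p ^ n) := by
  induction n with
  | zero => omega
  | succ m ih =>
    rcases Nat.eq_or_lt_of_le hn with h | h
    · rw [← h, pow_one]; exact hp
    · rw [pow_succ]
      exact onlyLambda_mul (ih (by omega)) hp

lemma onlyLambda_X_inl (i : Fin k) : OnlyLambda (MvPowerSeries.X (Sum.inl i) : Rkn k N) := by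
  intro d ⟨j, hj⟩
  rw [MvPowerSeries.coeff_X, if_neg]
  intro h
  subst h
  simp [Finsupp.single_apply] at hj

lemma onlyLambda_prodPow {a : Fin k ⊕ Fin N → Rkn k N}
    (ha : ∀ i, OnlyLambda (a (Sum.inl i))) {e : (Fin k ⊕ Fin N) →₀ ℕ}
    (he : ∀ j, e (Sum.inr j) = 0) : OnlyLambda (e.prod fun s n => a s ^ n) := by
  rw [Finsupp.prod]
  refine Finset.prod_induction _ OnlyLambda (fun p q => onlyLambda_mul) onlyLambda_one ?_
  intro s hs
  rcases s with i | j
  · have : 1 ≤ e (Sum.inl i) := Nat.one_le_iff_ne_zero.mpr (Finsupp.mem_support_iff.mp hs)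
    exact onlyLambda_pow (ha i) _ this
  · exact absurd (he j) (Finsupp.mem_support_iff.mp hs)

lemma onlyLambda_mvSubst {a : Fin k ⊕ Fin N → Rkn k N}
    (ha : ∀ i, OnlyLambda (a (Sum.inl i))) {p : Rkn k N} (hp : OnlyLambda p) :
    OnlyLambda (mvSubst a p) := by
  intro d hd
  rw [coeff_mvSubst]
  apply Finset.sum_eq_zero
  intro e _
  by_cases hpe : MvPowerSeries.coeff e p = 0
  · rw [hpe, zero_mul]
  · have he : ∀ j, e (Sum.inr j) = 0 := by
      by_contra hc
      push_neg at hc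
      exact hpe (hp e hc)
    rw [onlyLambda_prodPow ha he d hd, mul_zero]

lemma mvSubst_congr_inl {a a' : Fin k ⊕ Fin N → Rkn k N}
    (h : ∀ i, a (Sum.inl i) = a' (Sum.inl i)) {p : Rkn k N} (hp : OnlyLambda p) :
    mvSubst a p = mvSubst a' p := by
  ext d
  rw [coeff_mvSubst, coeff_mvSubst]
  refine Finset.sum_congr rfl fun e _ => ?_
  by_cases hpe : MvPowerSeries.coeff e p = 0
  · rw [hpe, zero_mul, zero_mul]
  · have he : ∀ j, e (Sum.inr j) = 0 := by
      by_contra hc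
      push_neg at hc
      exact hpe (hp e hc)
    have : (e.prod fun s n => a s ^ n) = e.prod fun s n => a' s ^ n := by
      refine Finsupp.prod_congr fun s hs => ?_
      rcases s with i | j
      · rw [h i]
      · exact absurd (he j) (Finsupp.mem_support_iff.mp hs)
    rw [this]

lemma mvSubst_eq_self_of_inl_X {a : Fin k ⊕ Fin N → Rkn k N}
    (h : ∀ i, a (Sum.inl i) = MvPowerSeries.X (Sum.inl i)) {p : Rkn k N} (hp : OnlyLambda p) :
    mvSubst a p = p := by
  rw [mvSubst_congr_inl (a' := fun s => MvPowerSeries.X s) h hp, mvSubst_id]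

/-- every monomial of `q` contains `φ_j` -/
def DivPhi {k N : ℕ} (j : Fin N) (q : Rkn k N) : Prop :=
  ∀ d : (Fin k ⊕ Fin N) →₀ ℕ, d (Sum.inr j) = 0 → MvPowerSeries.coeff d q = 0

lemma divPhi_X (j : Fin N) : DivPhi j (MvPowerSeries.X (Sum.inr j) : Rkn k N) := by
  intro d hd
  rw [MvPowerSeries.coeff_X, if_neg]
  intro h
  subst h
  simp [Finsupp.single_apply] at hd

lemma DivPhi.mul_left {j : Fin N} {q : Rkn k N} (h : DivPhi j q) (r : Rkn k N) :
    DivPhi j (r * q) := by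
  intro d hd
  rw [MvPowerSeries.coeff_mul]
  apply Finset.sum_eq_zero
  rintro ⟨d1, d2⟩ hmem
  rw [Finset.HasAntidiagonal.mem_antidiagonal] at hmem
  have : d2 (Sum.inr j) = 0 := by
    have : d1 (Sum.inr j) + d2 (Sum.inr j) = d (Sum.inr j) := by rw [← hmem]; simp
    omega
  rw [h d2 this, mul_zero]

lemma DivPhi.mul_right {j : Fin N} {q : Rkn k N} (h : DivPhi j q) (r : Rkn k N) :
    DivPhi j (q * r) := by
  rw [mul_comm]
  exact h.mul_left r

lemma DivPhi.pow {j : Fin N} {q : Rkn k N} (h : DivPhi j q) {n : ℕ} (hn : 1 ≤ n) :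
    DivPhi j (q ^ n) := by
  obtain ⟨m, rfl⟩ := Nat.exists_eq_add_of_le hn
  rw [add_comm, pow_succ]
  exact h.mul_left _

lemma divPhi_prodPow {a : Fin k ⊕ Fin N → Rkn k N} {j : Fin N}
    (hDiv : DivPhi j (a (Sum.inr j))) {e : (Fin k ⊕ Fin N) →₀ ℕ}
    (he : e (Sum.inr j) ≠ 0) : DivPhi j (e.prod fun s n => a s ^ n) := by
  have hmem : Sum.inr j ∈ e.support := Finsupp.mem_support_iff.mpr he
  intro d hd
  rw [← Finsupp.mul_prod_erase e (Sum.inr j) _ hmem]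
  exact (DivPhi.mul_right (hDiv.pow (Nat.one_le_iff_ne_zero.mpr he)) _) d hd

lemma divPhi_subMap {f : Fin k → Rkn k N} {w : Fin N → Rkn k N} (j : Fin N) :
    DivPhi j (subMap f w (Sum.inr j)) := by
  have : subMap f w (Sum.inr j) = w j * MvPowerSeries.X (Sum.inr j) := rfl
  rw [this]
  exact (divPhi_X j).mul_left _


lemma subMap_constantCoeff {f : Fin k → Rkn k N} {w : Fin N → Rkn k N} (hf : IsDkTuple f) :
    ∀ s, MvPowerSeries.constantCoeff (subMap f w s) = 0 := by
  rintro (i | j)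
  · obtain ⟨-, u, hu, -⟩ := hf i
    have : subMap f w (Sum.inl i) = f i := rfl
    rw [this, hu, map_mul, MvPowerSeries.constantCoeff_X, zero_mul]
  · have : subMap f w (Sum.inr j) = w j * MvPowerSeries.X (Sum.inr j) := rfl
    rw [this, map_mul, MvPowerSeries.constantCoeff_X, mul_zero]

lemma psi_constantCoeff {ψ : Rkn k N ≃ₐ[ℂ] Rkn k N} (hψ : IsPsi ψ) (g : Rkn k N) :
    MvPowerSeries.constantCoeff (ψ g) = MvPowerSeries.constantCoeff g := by
  obtain ⟨f, w, hf, hw, heq⟩ := hψ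
  rw [heq, constantCoeff_mvSubst]

lemma psi_symm_constantCoeff {ψ : Rkn k N ≃ₐ[ℂ] Rkn k N} (hψ : IsPsi ψ) (g : Rkn k N) :
    MvPowerSeries.constantCoeff (ψ.symm g) = MvPowerSeries.constantCoeff g := by
  conv_rhs => rw [← ψ.apply_symm_apply g]
  rw [psi_constantCoeff hψ]

/-- `ψ` reflects the property of involving only the `λ`-variables. -/
lemma onlyLambda_reflect {ψ : Rkn k N ≃ₐ[ℂ] Rkn k N} (hψ : IsPsi ψ) {p : Rkn k N}
    (h : OnlyLambda (ψ p)) : OnlyLambda p := by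
  obtain ⟨f, w, hf, hw, heq⟩ := hψ
  set p0 : Rkn k N := fun d => if ∀ j, d (Sum.inr j) = 0 then MvPowerSeries.coeff d p else 0
    with hp0def
  have hcoeff_p0 : ∀ d, MvPowerSeries.coeff d p0 =
      if ∀ j, d (Sum.inr j) = 0 then MvPowerSeries.coeff d p else 0 := fun d => rfl
  have hp0 : OnlyLambda p0 := by
    intro d ⟨j, hj⟩
    rw [hcoeff_p0, if_neg]
    push_neg
    exact ⟨j, hj⟩
  have hp1 : ∀ d : (Fin k ⊕ Fin N) →₀ ℕ, (∀ j, d (Sum.inr j) = 0) →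
      MvPowerSeries.coeff d (p - p0) = 0 := by
    intro d hd
    rw [map_sub, hcoeff_p0, if_pos hd, sub_self]
  have hψp1 : ∀ d : (Fin k ⊕ Fin N) →₀ ℕ, (∀ j, d (Sum.inr j) = 0) →
      MvPowerSeries.coeff d (ψ (p - p0)) = 0 := by
    intro d hd
    rw [heq, coeff_mvSubst]
    apply Finset.sum_eq_zero
    intro e _
    by_cases he : ∀ j, e (Sum.inr j) = 0
    · rw [hp1 e he, zero_mul]
    · push_neg at he
      obtain ⟨j, hj⟩ := he
      rw [divPhi_prodPow (divPhi_subMap j) hj d (hd j), mul_zero]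
  have hψp0 : OnlyLambda (ψ p0) := by
    rw [heq]
    exact onlyLambda_mvSubst (fun i => (hf i).1) hp0
  have hψp1' : OnlyLambda (ψ (p - p0)) := by
    rw [map_sub]
    exact onlyLambda_sub h hψp0
  have hzero : ψ (p - p0) = 0 := by
    ext d
    by_cases hd : ∀ j, d (Sum.inr j) = 0
    · rw [hψp1 d hd, map_zero]
    · push_neg at hd
      rw [hψp1' d hd, map_zero]
  have : p - p0 = 0 := by
    have := ψ.injective (by rw [hzero, map_zero] : ψ (p - p0) = ψ 0)
    exact this
  have hpp0 : p = p0 := by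
    rw [sub_eq_zero] at this
    exact this
  rw [hpp0]
  exact hp0

/-- the inverse of a unit power series involving only `λ` involves only `λ` -/
lemma onlyLambda_of_mul_eq_one {u v : Rkn k N} (h : u * v = 1) (hu : OnlyLambda u)
    (hc : MvPowerSeries.constantCoeff u = 1) : OnlyLambda v := by
  suffices H : ∀ n (d : (Fin k ⊕ Fin N) →₀ ℕ), degS d ≤ n → (∃ j, d (Sum.inr j) ≠ 0) →
      MvPowerSeries.coeff d v = 0 by
    intro d hd
    exact H (degS d) d le_rfl hd
  intro n
  induction n with
  | zero =>
    rintro d hd ⟨j, hj⟩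
    exfalso
    have : 1 ≤ d (Sum.inr j) := Nat.one_le_iff_ne_zero.mpr hj
    have := le_degS d (Sum.inr j)
    omega
  | succ m ih =>
    rintro d hd ⟨j, hj⟩
    have hd0 : d ≠ 0 := by
      intro h0
      rw [h0] at hj
      simp at hj
    have h0 : MvPowerSeries.coeff d (u * v) = 0 := by
      rw [h, MvPowerSeries.coeff_one, if_neg hd0]
    rw [MvPowerSeries.coeff_mul] at h0
    have hmem : ((0 : (Fin k ⊕ Fin N) →₀ ℕ), d) ∈ Finset.HasAntidiagonal.antidiagonal d := by
      rw [Finset.HasAntidiagonal.mem_antidiagonal, zero_add]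
    rw [← Finset.add_sum_erase _ _ hmem] at h0
    have hrest : ∑ p ∈ (Finset.HasAntidiagonal.antidiagonal d).erase (0, d),
        MvPowerSeries.coeff p.1 u * MvPowerSeries.coeff p.2 v = 0 := by
      apply Finset.sum_eq_zero
      rintro ⟨d1, d2⟩ hp
      rw [Finset.mem_erase, Finset.HasAntidiagonal.mem_antidiagonal] at hp
      obtain ⟨hne, hsum⟩ := hp
      by_cases hu1 : MvPowerSeries.coeff d1 u = 0
      · rw [hu1, zero_mul]
      · have hd1 : ∀ j', d1 (Sum.inr j') = 0 := by
          by_contra hc'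
          push_neg at hc'
          exact hu1 (hu d1 hc')
        have hd1ne : d1 ≠ 0 := by
          intro h1
          exact hne (by rw [h1, Prod.mk.injEq]; exact ⟨rfl, by rw [← hsum, h1, zero_add]⟩)
        have hd2j : d2 (Sum.inr j) ≠ 0 := by
          have : d1 (Sum.inr j) + d2 (Sum.inr j) = d (Sum.inr j) := by rw [← hsum]; simp
          rw [hd1 j] at this
          omega
        have hdeg : degS d2 ≤ m := by
          have h1 := one_le_degS hd1ne
          have h2 : degS d1 + degS d2 = degS d := by rw [← degS_add, hsum]
          omega
        rw [ih d2 hdeg ⟨j, hd2j⟩, mul_zero]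
    rw [hrest, add_zero] at h0
    rw [MvPowerSeries.coeff_zero_eq_constantCoeff_apply, hc, one_mul] at h0
    exact h0


lemma psi_inv_def (ψ : Rkn k N ≃ₐ[ℂ] Rkn k N) : ψ⁻¹ = ψ.symm := rfl

lemma psi_mul_apply (ψ1 ψ2 : Rkn k N ≃ₐ[ℂ] Rkn k N) (g : Rkn k N) :
    (ψ1 * ψ2) g = ψ1 (ψ2 g) := rfl

/-- construct a substitution `AlgEquiv` from mutually inverse substitution data -/
noncomputable def mkPsi {a aInv : Fin k ⊕ Fin N → Rkn k N}
    (ha : ∀ s, MvPowerSeries.constantCoeff (a s) = 0)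
    (haInv : ∀ s, MvPowerSeries.constantCoeff (aInv s) = 0)
    (h1 : ∀ s, mvSubst a (aInv s) = MvPowerSeries.X s)
    (h2 : ∀ s, mvSubst aInv (a s) = MvPowerSeries.X s) : Rkn k N ≃ₐ[ℂ] Rkn k N where
  toFun := mvSubst a
  invFun := mvSubst aInv
  left_inv g := by
    rw [mvSubst_comp haInv ha, funext h2, mvSubst_id]
  right_inv g := by
    rw [mvSubst_comp ha haInv, funext h1, mvSubst_id]
  map_mul' := mvSubst_mul ha
  map_add' := mvSubst_add a
  commutes' := mvSubst_algebraMap ha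

@[simp] lemma mkPsi_apply {a aInv : Fin k ⊕ Fin N → Rkn k N}
    (ha : ∀ s, MvPowerSeries.constantCoeff (a s) = 0)
    (haInv : ∀ s, MvPowerSeries.constantCoeff (aInv s) = 0)
    (h1 : ∀ s, mvSubst a (aInv s) = MvPowerSeries.X s)
    (h2 : ∀ s, mvSubst aInv (a s) = MvPowerSeries.X s) (g : Rkn k N) :
    mkPsi ha haInv h1 h2 g = mvSubst a g := rfl

@[simp] lemma mkPsi_symm_apply {a aInv : Fin k ⊕ Fin N → Rkn k N}
    (ha : ∀ s, MvPowerSeries.constantCoeff (a s) = 0)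
    (haInv : ∀ s, MvPowerSeries.constantCoeff (aInv s) = 0)
    (h1 : ∀ s, mvSubst a (aInv s) = MvPowerSeries.X s)
    (h2 : ∀ s, mvSubst aInv (a s) = MvPowerSeries.X s) (g : Rkn k N) :
    (mkPsi ha haInv h1 h2).symm g = mvSubst aInv g := rfl

lemma subMap_inl (f : Fin k → Rkn k N) (w : Fin N → Rkn k N) (i : Fin k) :
    subMap f w (Sum.inl i) = f i := rfl

lemma subMap_inr (f : Fin k → Rkn k N) (w : Fin N → Rkn k N) (j : Fin N) :
    subMap f w (Sum.inr j) = w j * MvPowerSeries.X (Sum.inr j) := rfl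

lemma subMap_id_one : subMap (fun i : Fin k => MvPowerSeries.X (Sum.inl i))
    (fun _ : Fin N => (1 : Rkn k N)) = fun s => MvPowerSeries.X s := by
  funext s
  rcases s with i | j
  · rfl
  · rw [subMap_inr, one_mul]

lemma isDkTuple_id : IsDkTuple (fun i : Fin k => (MvPowerSeries.X (Sum.inl i) : Rkn k N)) :=
  fun i => ⟨onlyLambda_X_inl i, 1, (mul_one _).symm, map_one _⟩

lemma isWTuple_one : IsWTuple (fun _ : Fin N => (1 : Rkn k N)) :=
  fun _ => ⟨onlyLambda_one, map_one _⟩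

lemma isPsiId_one : IsPsiId (1 : Rkn k N ≃ₐ[ℂ] Rkn k N) := by
  refine ⟨fun _ => 1, isWTuple_one, fun g => ?_⟩
  rw [subMap_id_one, mvSubst_id]
  rfl

lemma isPsiDiff_one : IsPsiDiff (1 : Rkn k N ≃ₐ[ℂ] Rkn k N) := by
  refine ⟨fun i => MvPowerSeries.X (Sum.inl i), isDkTuple_id, fun g => ?_⟩
  rw [subMap_id_one, mvSubst_id]
  rfl

lemma isPsi_one : IsPsi (1 : Rkn k N ≃ₐ[ℂ] Rkn k N) := by
  obtain ⟨f, hf, he⟩ := isPsiDiff_one (k := k) (N := N)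
  exact ⟨f, fun _ => 1, hf, isWTuple_one, he⟩

lemma psi_apply_X_inl {ψ : Rkn k N ≃ₐ[ℂ] Rkn k N} {f : Fin k → Rkn k N} {w : Fin N → Rkn k N}
    (hf : IsDkTuple f) (he : ∀ g, ψ g = mvSubst (subMap f w) g) (i : Fin k) :
    ψ (MvPowerSeries.X (Sum.inl i)) = f i := by
  rw [he, mvSubst_X (subMap_constantCoeff hf), subMap_inl]

lemma psi_apply_X_inr {ψ : Rkn k N ≃ₐ[ℂ] Rkn k N} {f : Fin k → Rkn k N} {w : Fin N → Rkn k N}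
    (hf : IsDkTuple f) (he : ∀ g, ψ g = mvSubst (subMap f w) g) (j : Fin N) :
    ψ (MvPowerSeries.X (Sum.inr j)) = w j * MvPowerSeries.X (Sum.inr j) := by
  rw [he, mvSubst_X (subMap_constantCoeff hf), subMap_inr]

/-- composition law for the substitution automorphisms -/
lemma psi_mul_data {ψ1 ψ2 : Rkn k N ≃ₐ[ℂ] Rkn k N} {f1 f2 : Fin k → Rkn k N}
    {w1 w2 : Fin N → Rkn k N} (hf1 : IsDkTuple f1) (hw1 : IsWTuple w1)
    (hf2 : IsDkTuple f2) (hw2 : IsWTuple w2)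
    (he1 : ∀ g, ψ1 g = mvSubst (subMap f1 w1) g)
    (he2 : ∀ g, ψ2 g = mvSubst (subMap f2 w2) g) :
    IsDkTuple (fun i => ψ1 (f2 i)) ∧ IsWTuple (fun j => ψ1 (w2 j) * w1 j) ∧
      ∀ g, (ψ1 * ψ2) g =
        mvSubst (subMap (fun i => ψ1 (f2 i)) (fun j => ψ1 (w2 j) * w1 j)) g := by
  have ha1 := subMap_constantCoeff (w := w1) hf1
  have ha2 := subMap_constantCoeff (w := w2) hf2
  have hpsi1 : IsPsi ψ1 := ⟨f1, w1, hf1, hw1, he1⟩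
  refine ⟨?_, ?_, ?_⟩
  · intro i
    obtain ⟨hOL2, u2, hu2, hcu2⟩ := hf2 i
    constructor
    · show OnlyLambda (ψ1 (f2 i))
      rw [he1]
      exact onlyLambda_mvSubst (fun i' => (hf1 i').1) hOL2
    · obtain ⟨hOL1, u1, hu1, hcu1⟩ := hf1 i
      refine ⟨u1 * ψ1 u2, ?_, ?_⟩
      · show ψ1 (f2 i) = _
        rw [hu2, map_mul, psi_apply_X_inl hf1 he1, hu1, mul_assoc]
      · rw [map_mul, hcu1, one_mul, psi_constantCoeff hpsi1, hcu2]
  · intro j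
    constructor
    · show OnlyLambda (ψ1 (w2 j) * w1 j)
      refine onlyLambda_mul ?_ (hw1 j).1
      rw [he1]
      exact onlyLambda_mvSubst (fun i' => (hf1 i').1) (hw2 j).1
    · show MvPowerSeries.constantCoeff (ψ1 (w2 j) * w1 j) = 1
      rw [map_mul, psi_constantCoeff hpsi1, (hw2 j).2, (hw1 j).2, one_mul]
  · intro g
    rw [psi_mul_apply, he2, he1, mvSubst_comp ha1 ha2]
    have harg : (fun s => mvSubst (subMap f1 w1) (subMap f2 w2 s)) =
        subMap (fun i => ψ1 (f2 i)) (fun j => ψ1 (w2 j) * w1 j) := by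
      funext s
      rcases s with i | j
      · rw [subMap_inl, subMap_inl, ← he1]
      · rw [subMap_inr, subMap_inr, mvSubst_mul ha1, mvSubst_X ha1, subMap_inr, ← he1,
          mul_assoc]
    rw [harg]

/-- inverse law for the substitution automorphisms -/
lemma psi_symm_data {ψ : Rkn k N ≃ₐ[ℂ] Rkn k N} {f : Fin k → Rkn k N} {w : Fin N → Rkn k N}
    (hf : IsDkTuple f) (hw : IsWTuple w)
    (he : ∀ g, ψ g = mvSubst (subMap f w) g) :
    ∃ w' : Fin N → Rkn k N, IsWTuple w' ∧ (∀ j, ψ.symm (w j) * w' j = 1) ∧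
      IsDkTuple (fun i => ψ.symm (MvPowerSeries.X (Sum.inl i))) ∧
      ∀ g, ψ.symm g =
        mvSubst (subMap (fun i => ψ.symm (MvPowerSeries.X (Sum.inl i))) w') g := by
  have ha := subMap_constantCoeff (w := w) hf
  have hpsi : IsPsi ψ := ⟨f, w, hf, hw, he⟩
  set b : Fin k ⊕ Fin N → Rkn k N := fun s => ψ.symm (MvPowerSeries.X s) with hbdef
  have hb : ∀ s, MvPowerSeries.constantCoeff (b s) = 0 := by
    intro s
    rw [hbdef]
    rw [psi_symm_constantCoeff hpsi, MvPowerSeries.constantCoeff_X]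
  have hsymm : ∀ g, ψ.symm g = mvSubst b g := by
    intro g
    apply ψ.injective
    rw [ψ.apply_symm_apply, he, mvSubst_comp ha hb]
    have harg : (fun s => mvSubst (subMap f w) (b s)) = fun s => MvPowerSeries.X s := by
      funext s
      rw [← he, hbdef]
      exact ψ.apply_symm_apply _
    rw [harg, mvSubst_id]
  -- inverses of the `w j` under `ψ.symm`
  have hvconst : ∀ j, MvPowerSeries.constantCoeff (ψ.symm (w j)) = 1 := by
    intro j
    rw [psi_symm_constantCoeff hpsi, (hw j).2]
  set w' : Fin N → Rkn k N := fun j => MvPowerSeries.invOfUnit (ψ.symm (w j)) 1 with hw'def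
  have hvw' : ∀ j, ψ.symm (w j) * w' j = 1 := by
    intro j
    exact MvPowerSeries.mul_invOfUnit _ 1 (by rw [hvconst j]; rfl)
  have hvOL : ∀ j, OnlyLambda (ψ.symm (w j)) := by
    intro j
    refine onlyLambda_reflect hpsi ?_
    rw [ψ.apply_symm_apply]
    exact (hw j).1
  have hw'OL : ∀ j, OnlyLambda (w' j) :=
    fun j => onlyLambda_of_mul_eq_one (hvw' j) (hvOL j) (hvconst j)
  have hw'const : ∀ j, MvPowerSeries.constantCoeff (w' j) = 1 := by
    intro j
    have := congrArg (MvPowerSeries.constantCoeff) (hvw' j)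
    rw [map_mul, hvconst j, one_mul, map_one] at this
    exact this
  have hw'tuple : IsWTuple w' := fun j => ⟨hw'OL j, hw'const j⟩
  -- shape of `b` on the `inr` variables
  have hbinr : ∀ j, b (Sum.inr j) = w' j * MvPowerSeries.X (Sum.inr j) := by
    intro j
    have h1 : ψ.symm (w j) * b (Sum.inr j) = MvPowerSeries.X (Sum.inr j) := by
      rw [hbdef, ← map_mul, ← psi_apply_X_inr hf he j, ψ.symm_apply_apply]
    calc b (Sum.inr j) = (w' j * ψ.symm (w j)) * b (Sum.inr j) := by
          rw [mul_comm (w' j), hvw' j, one_mul]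
    _ = w' j * (ψ.symm (w j) * b (Sum.inr j)) := by rw [mul_assoc]
    _ = w' j * MvPowerSeries.X (Sum.inr j) := by rw [h1]
  -- shape of `b` on the `inl` variables
  have hbOL : ∀ i, OnlyLambda (b (Sum.inl i)) := by
    intro i
    refine onlyLambda_reflect hpsi ?_
    rw [hbdef, ψ.apply_symm_apply]
    exact onlyLambda_X_inl i
  have hftuple : IsDkTuple (fun i => ψ.symm (MvPowerSeries.X (Sum.inl i))) := by
    intro i
    refine ⟨hbOL i, ?_⟩
    obtain ⟨hOL, u, hu, hcu⟩ := hf i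
    have hsu : MvPowerSeries.constantCoeff (ψ.symm u) = 1 := by
      rw [psi_symm_constantCoeff hpsi, hcu]
    set su := ψ.symm u with hsudef
    set suInv := MvPowerSeries.invOfUnit su 1 with hsuInvdef
    have hsumul : su * suInv = 1 := MvPowerSeries.mul_invOfUnit _ 1 (by rw [hsu]; rfl)
    have hXi : MvPowerSeries.X (Sum.inl i) = ψ.symm (MvPowerSeries.X (Sum.inl i)) * su := by
      have : ψ.symm (f i) = MvPowerSeries.X (Sum.inl i) := by
        rw [← psi_apply_X_inl hf he i, ψ.symm_apply_apply]
      conv_lhs => rw [← this, hu]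
      rw [map_mul]
    refine ⟨suInv, ?_, ?_⟩
    · show ψ.symm (MvPowerSeries.X (Sum.inl i)) = _
      calc ψ.symm (MvPowerSeries.X (Sum.inl i))
          = ψ.symm (MvPowerSeries.X (Sum.inl i)) * (su * suInv) := by rw [hsumul, mul_one]
      _ = (ψ.symm (MvPowerSeries.X (Sum.inl i)) * su) * suInv := by rw [mul_assoc]
      _ = MvPowerSeries.X (Sum.inl i) * suInv := by rw [← hXi]
    · have := congrArg (MvPowerSeries.constantCoeff) hsumul
      rw [map_mul, hsu, one_mul, map_one] at this
      exact this
  refine ⟨w', hw'tuple, hvw', hftuple, fun g => ?_⟩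
  rw [hsymm g]
  have harg : b = subMap (fun i => ψ.symm (MvPowerSeries.X (Sum.inl i))) w' := by
    funext s
    rcases s with i | j
    · rfl
    · rw [subMap_inr, ← hbinr j]
  rw [← harg]

lemma isPsi_mul {ψ1 ψ2 : Rkn k N ≃ₐ[ℂ] Rkn k N} (h1 : IsPsi ψ1) (h2 : IsPsi ψ2) :
    IsPsi (ψ1 * ψ2) := by
  obtain ⟨f1, w1, hf1, hw1, he1⟩ := h1
  obtain ⟨f2, w2, hf2, hw2, he2⟩ := h2
  obtain ⟨hfD, hwD, he⟩ := psi_mul_data hf1 hw1 hf2 hw2 he1 he2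
  exact ⟨_, _, hfD, hwD, he⟩

lemma isPsi_inv {ψ : Rkn k N ≃ₐ[ℂ] Rkn k N} (h : IsPsi ψ) : IsPsi ψ⁻¹ := by
  obtain ⟨f, w, hf, hw, he⟩ := h
  obtain ⟨w', hw', -, hf', he'⟩ := psi_symm_data hf hw he
  rw [psi_inv_def]
  exact ⟨_, _, hf', hw', he'⟩

lemma isPsiId_isPsi {ψ : Rkn k N ≃ₐ[ℂ] Rkn k N} (h : IsPsiId ψ) : IsPsi ψ := by
  obtain ⟨w, hw, he⟩ := h
  exact ⟨_, _, isDkTuple_id, hw, he⟩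

lemma isPsiDiff_isPsi {ψ : Rkn k N ≃ₐ[ℂ] Rkn k N} (h : IsPsiDiff ψ) : IsPsi ψ := by
  obtain ⟨f, hf, he⟩ := h
  exact ⟨_, _, hf, isWTuple_one, he⟩

lemma isPsiId_mul {ψ1 ψ2 : Rkn k N ≃ₐ[ℂ] Rkn k N} (h1 : IsPsiId ψ1) (h2 : IsPsiId ψ2) :
    IsPsiId (ψ1 * ψ2) := by
  obtain ⟨w1, hw1, he1⟩ := h1
  obtain ⟨w2, hw2, he2⟩ := h2
  obtain ⟨hfD, hwD, he⟩ := psi_mul_data isDkTuple_id hw1 isDkTuple_id hw2 he1 he2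
  refine ⟨fun j => ψ1 (w2 j) * w1 j, hwD, fun g => ?_⟩
  rw [he g]
  refine congrArg (fun a => mvSubst a g) ?_
  funext s
  rcases s with i | j
  · show ψ1 (MvPowerSeries.X (Sum.inl i)) = MvPowerSeries.X (Sum.inl i)
    exact psi_apply_X_inl isDkTuple_id he1 i
  · rfl

lemma isPsiId_inv {ψ : Rkn k N ≃ₐ[ℂ] Rkn k N} (h : IsPsiId ψ) : IsPsiId ψ⁻¹ := by
  obtain ⟨w, hw, he⟩ := h
  obtain ⟨w', hw', -, -, he'⟩ := psi_symm_data isDkTuple_id hw he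
  rw [psi_inv_def]
  refine ⟨w', hw', fun g => ?_⟩
  rw [he' g]
  refine congrArg (fun a => mvSubst a g) ?_
  funext s
  rcases s with i | j
  · show ψ.symm (MvPowerSeries.X (Sum.inl i)) = MvPowerSeries.X (Sum.inl i)
    exact ψ.injective (by rw [ψ.apply_symm_apply, psi_apply_X_inl isDkTuple_id he i])
  · rfl

lemma isPsiDiff_mul {ψ1 ψ2 : Rkn k N ≃ₐ[ℂ] Rkn k N} (h1 : IsPsiDiff ψ1) (h2 : IsPsiDiff ψ2) :
    IsPsiDiff (ψ1 * ψ2) := by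
  obtain ⟨f1, hf1, he1⟩ := h1
  obtain ⟨f2, hf2, he2⟩ := h2
  obtain ⟨hfD, hwD, he⟩ := psi_mul_data hf1 isWTuple_one hf2 isWTuple_one he1 he2
  refine ⟨fun i => ψ1 (f2 i), hfD, fun g => ?_⟩
  rw [he g]
  refine congrArg (fun a => mvSubst a g) ?_
  funext s
  rcases s with i | j
  · rfl
  · show (ψ1 1 * 1) * MvPowerSeries.X (Sum.inr j) = 1 * MvPowerSeries.X (Sum.inr j)
    rw [map_one, one_mul]

lemma isPsiDiff_inv {ψ : Rkn k N ≃ₐ[ℂ] Rkn k N} (h : IsPsiDiff ψ) : IsPsiDiff ψ⁻¹ := by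
  obtain ⟨f, hf, he⟩ := h
  obtain ⟨w', hw', hvw', hf', he'⟩ := psi_symm_data hf isWTuple_one he
  rw [psi_inv_def]
  refine ⟨fun i => ψ.symm (MvPowerSeries.X (Sum.inl i)), hf', fun g => ?_⟩
  rw [he' g]
  refine congrArg (fun a => mvSubst a g) ?_
  funext s
  rcases s with i | j
  · rfl
  · show w' j * MvPowerSeries.X (Sum.inr j) = 1 * MvPowerSeries.X (Sum.inr j)
    have := hvw' j
    rw [map_one, one_mul] at this
    rw [this, one_mul]

variable (k N) in
noncomputable def Gsub : Subgroup (Rkn k N ≃ₐ[ℂ] Rkn k N) where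
  carrier := {ψ | IsPsi ψ}
  one_mem' := isPsi_one
  mul_mem' := fun h1 h2 => isPsi_mul h1 h2
  inv_mem' := fun h => isPsi_inv h

variable (k N) in
noncomputable def N0sub : Subgroup (Rkn k N ≃ₐ[ℂ] Rkn k N) where
  carrier := {ψ | IsPsiId ψ}
  one_mem' := isPsiId_one
  mul_mem' := fun h1 h2 => isPsiId_mul h1 h2
  inv_mem' := fun h => isPsiId_inv h

variable (k N) in
noncomputable def Dsub : Subgroup (Rkn k N ≃ₐ[ℂ] Rkn k N) where
  carrier := {ψ | IsPsiDiff ψ}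
  one_mem' := isPsiDiff_one
  mul_mem' := fun h1 h2 => isPsiDiff_mul h1 h2
  inv_mem' := fun h => isPsiDiff_inv h

lemma mem_Gsub {ψ : Rkn k N ≃ₐ[ℂ] Rkn k N} : ψ ∈ Gsub k N ↔ IsPsi ψ := Iff.rfl
lemma mem_N0sub {ψ : Rkn k N ≃ₐ[ℂ] Rkn k N} : ψ ∈ N0sub k N ↔ IsPsiId ψ := Iff.rfl
lemma mem_Dsub {ψ : Rkn k N ≃ₐ[ℂ] Rkn k N} : ψ ∈ Dsub k N ↔ IsPsiDiff ψ := Iff.rfl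

lemma N0_le_G : N0sub k N ≤ Gsub k N := fun _ h => isPsiId_isPsi h
lemma D_le_G : Dsub k N ≤ Gsub k N := fun _ h => isPsiDiff_isPsi h

/-- an element of `G` whose `f`-part is the identity is in `N₀` -/
lemma isPsiId_of_isPsi {ψ : Rkn k N ≃ₐ[ℂ] Rkn k N} (h : IsPsi ψ)
    (hfix : ∀ i, ψ (MvPowerSeries.X (Sum.inl i)) = MvPowerSeries.X (Sum.inl i)) :
    IsPsiId ψ := by
  obtain ⟨f, w, hf, hw, he⟩ := h
  refine ⟨w, hw, fun g => ?_⟩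
  rw [he g]
  refine congrArg (fun a => mvSubst a g) ?_
  funext s
  rcases s with i | j
  · show f i = MvPowerSeries.X (Sum.inl i)
    rw [← psi_apply_X_inl hf he i, hfix i]
  · rfl

lemma X_ne_zero (s : Fin k ⊕ Fin N) : (MvPowerSeries.X s : Rkn k N) ≠ 0 := by
  intro h
  have := congrArg (MvPowerSeries.coeff (Finsupp.single s 1)) h
  rw [MvPowerSeries.coeff_X, if_pos rfl, map_zero] at this
  exact one_ne_zero this

lemma mul_X_cancel {p q : Rkn k N} {s : Fin k ⊕ Fin N}
    (h : p * MvPowerSeries.X s = q * MvPowerSeries.X s) : p = q :=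
  mul_right_cancel₀ (X_ne_zero s) h

variable (k N) in
noncomputable def Usub : Subgroup (Rkn k N)ˣ where
  carrier := {u : (Rkn k N)ˣ |
    MvPowerSeries.constantCoeff (u : Rkn k N) = 1 ∧ OnlyLambda (u : Rkn k N)}
  one_mem' := ⟨by rw [Units.val_one, map_one], by rw [Units.val_one]; exact onlyLambda_one⟩
  mul_mem' := by
    rintro a b ⟨ha1, ha2⟩ ⟨hb1, hb2⟩
    constructor
    · rw [Units.val_mul, map_mul, ha1, hb1, one_mul]
    · rw [Units.val_mul]
      exact onlyLambda_mul ha2 hb2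
  inv_mem' := by
    rintro u ⟨h1, h2⟩
    have hmul : (u : Rkn k N) * ((u⁻¹ : (Rkn k N)ˣ) : Rkn k N) = 1 := u.mul_inv
    constructor
    · have := congrArg (MvPowerSeries.constantCoeff) hmul
      rw [map_mul, h1, one_mul, map_one] at this
      exact this
    · exact onlyLambda_of_mul_eq_one hmul h2 h1

lemma mem_Usub {u : (Rkn k N)ˣ} : u ∈ Usub k N ↔
    MvPowerSeries.constantCoeff (u : Rkn k N) = 1 ∧ OnlyLambda (u : Rkn k N) := Iff.rfl

/-- pure wave-function renormalization automorphism from a tuple of invertible series -/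
noncomputable def mkPsiId (v vInv : Fin N → Rkn k N)
    (hOL : ∀ j, OnlyLambda (v j)) (hOLInv : ∀ j, OnlyLambda (vInv j))
    (hmul : ∀ j, v j * vInv j = 1) : Rkn k N ≃ₐ[ℂ] Rkn k N := by
  have hc1 := subMap_constantCoeff (w := v) (isDkTuple_id (k := k) (N := N))
  have hc2 := subMap_constantCoeff (w := vInv) (isDkTuple_id (k := k) (N := N))
  refine mkPsi (a := subMap (fun i => MvPowerSeries.X (Sum.inl i)) v)
      (aInv := subMap (fun i => MvPowerSeries.X (Sum.inl i)) vInv) hc1 hc2 ?_ ?_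
  · rintro (i | j)
    · rw [subMap_inl, mvSubst_X hc1, subMap_inl]
    · rw [subMap_inr, mvSubst_mul hc1, mvSubst_X hc1, subMap_inr,
        mvSubst_eq_self_of_inl_X (a := subMap (fun i => MvPowerSeries.X (Sum.inl i)) v)
          (fun i => rfl) (hOLInv j), ← mul_assoc, mul_comm (vInv j) (v j), hmul j, one_mul]
  · rintro (i | j)
    · rw [subMap_inl, mvSubst_X hc2, subMap_inl]
    · rw [subMap_inr, mvSubst_mul hc2, mvSubst_X hc2, subMap_inr,
        mvSubst_eq_self_of_inl_X (a := subMap (fun i => MvPowerSeries.X (Sum.inl i)) vInv)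
          (fun i => rfl) (hOL j), ← mul_assoc, hmul j, one_mul]

lemma mkPsiId_apply (v vInv : Fin N → Rkn k N)
    (hOL : ∀ j, OnlyLambda (v j)) (hOLInv : ∀ j, OnlyLambda (vInv j))
    (hmul : ∀ j, v j * vInv j = 1) (g : Rkn k N) :
    mkPsiId v vInv hOL hOLInv hmul g =
      mvSubst (subMap (fun i => MvPowerSeries.X (Sum.inl i)) v) g := rfl

lemma mkPsiId_isPsiId (v vInv : Fin N → Rkn k N)
    (hOL : ∀ j, OnlyLambda (v j)) (hOLInv : ∀ j, OnlyLambda (vInv j))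
    (hmul : ∀ j, v j * vInv j = 1)
    (hc : ∀ j, MvPowerSeries.constantCoeff (v j) = 1) :
    IsPsiId (mkPsiId v vInv hOL hOLInv hmul) :=
  ⟨v, fun j => ⟨hOL j, hc j⟩, fun _ => rfl⟩

/-- the map `w ↦ Ψ_{id,w}` into `N₀` -/
noncomputable def thetaFun (w : Fin N → Usub k N) : N0sub k N :=
  ⟨mkPsiId (fun j => ((w j : (Rkn k N)ˣ) : Rkn k N))
      (fun j => (((w j : (Rkn k N)ˣ)⁻¹ : (Rkn k N)ˣ) : Rkn k N))
      (fun j => (mem_Usub.mp (w j).2).2)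
      (fun j => (mem_Usub.mp ((w j)⁻¹ : Usub k N).2).2)
      (fun j => Units.mul_inv _),
    mkPsiId_isPsiId _ _ _ _ _ (fun j => (mem_Usub.mp (w j).2).1)⟩

lemma thetaFun_apply (w : Fin N → Usub k N) (g : Rkn k N) :
    ((thetaFun w : N0sub k N) : Rkn k N ≃ₐ[ℂ] Rkn k N) g =
      mvSubst (subMap (fun i => MvPowerSeries.X (Sum.inl i))
        (fun j => ((w j : (Rkn k N)ˣ) : Rkn k N))) g := rfl

lemma thetaFun_mul (w w' : Fin N → Usub k N) :
    thetaFun (w * w') = thetaFun w * thetaFun w' := by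
  apply Subtype.ext
  apply AlgEquiv.ext
  intro g
  set ψ1 := ((thetaFun w : N0sub k N) : Rkn k N ≃ₐ[ℂ] Rkn k N)
  set ψ2 := ((thetaFun w' : N0sub k N) : Rkn k N ≃ₐ[ℂ] Rkn k N)
  have hw1 : IsWTuple (fun j => ((w j : (Rkn k N)ˣ) : Rkn k N)) :=
    fun j => ⟨(mem_Usub.mp (w j).2).2, (mem_Usub.mp (w j).2).1⟩
  have hw2 : IsWTuple (fun j => ((w' j : (Rkn k N)ˣ) : Rkn k N)) :=
    fun j => ⟨(mem_Usub.mp (w' j).2).2, (mem_Usub.mp (w' j).2).1⟩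
  have he1 : ∀ g, ψ1 g = mvSubst (subMap (fun i => MvPowerSeries.X (Sum.inl i))
      (fun j => ((w j : (Rkn k N)ˣ) : Rkn k N))) g := fun g => rfl
  have he2 : ∀ g, ψ2 g = mvSubst (subMap (fun i => MvPowerSeries.X (Sum.inl i))
      (fun j => ((w' j : (Rkn k N)ˣ) : Rkn k N))) g := fun g => rfl
  obtain ⟨-, -, he⟩ := psi_mul_data isDkTuple_id hw1 isDkTuple_id hw2 he1 he2
  have hLHS : ((thetaFun (w * w') : N0sub k N) : Rkn k N ≃ₐ[ℂ] Rkn k N) g =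
      mvSubst (subMap (fun i => MvPowerSeries.X (Sum.inl i))
        (fun j => (((w * w') j : (Rkn k N)ˣ) : Rkn k N))) g := rfl
  have hcoe : ((thetaFun w * thetaFun w' : N0sub k N) : Rkn k N ≃ₐ[ℂ] Rkn k N) = ψ1 * ψ2 := rfl
  rw [hLHS, hcoe, he g]
  refine congrArg (fun a => mvSubst a g) ?_
  funext s
  rcases s with i | j
  · show MvPowerSeries.X (Sum.inl i) = ψ1 (MvPowerSeries.X (Sum.inl i))
    exact (psi_apply_X_inl isDkTuple_id he1 i).symm
  · show (((w * w') j : (Rkn k N)ˣ) : Rkn k N) * MvPowerSeries.X (Sum.inr j) =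
      (ψ1 (((w' j : (Rkn k N)ˣ) : Rkn k N)) * ((w j : (Rkn k N)ˣ) : Rkn k N)) *
        MvPowerSeries.X (Sum.inr j)
    have h1 : ψ1 (((w' j : (Rkn k N)ˣ) : Rkn k N)) = ((w' j : (Rkn k N)ˣ) : Rkn k N) := by
      rw [he1]
      exact mvSubst_eq_self_of_inl_X
        (a := subMap (fun i => MvPowerSeries.X (Sum.inl i))
          (fun j' => ((w j' : (Rkn k N)ˣ) : Rkn k N)))
        (fun i => rfl) (mem_Usub.mp (w' j).2).2
    rw [h1]
    have h2 : (((w * w') j : (Rkn k N)ˣ) : Rkn k N) =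
        ((w j : (Rkn k N)ˣ) : Rkn k N) * ((w' j : (Rkn k N)ˣ) : Rkn k N) := rfl
    rw [h2, mul_comm (((w j : (Rkn k N)ˣ) : Rkn k N)) _]

lemma thetaFun_injective : Function.Injective (thetaFun (k := k) (N := N)) := by
  intro w w' h
  funext j
  have he1 : ∀ g, ((thetaFun w : N0sub k N) : Rkn k N ≃ₐ[ℂ] Rkn k N) g =
      mvSubst (subMap (fun i => MvPowerSeries.X (Sum.inl i))
        (fun j => ((w j : (Rkn k N)ˣ) : Rkn k N))) g := fun g => rfl
  have he2 : ∀ g, ((thetaFun w' : N0sub k N) : Rkn k N ≃ₐ[ℂ] Rkn k N) g =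
      mvSubst (subMap (fun i => MvPowerSeries.X (Sum.inl i))
        (fun j => ((w' j : (Rkn k N)ˣ) : Rkn k N))) g := fun g => rfl
  have h1 := psi_apply_X_inr isDkTuple_id he1 j
  have h2 := psi_apply_X_inr isDkTuple_id he2 j
  rw [h] at h1
  have := mul_X_cancel (h1.symm.trans h2)
  exact Subtype.ext (Units.ext this)

lemma thetaFun_surjective : Function.Surjective (thetaFun (k := k) (N := N)) := by
  rintro ⟨ψ, hψ⟩
  obtain ⟨w, hw, he⟩ := hψ
  have hinv : ∀ j, w j * MvPowerSeries.invOfUnit (w j) 1 = 1 :=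
    fun j => MvPowerSeries.mul_invOfUnit _ 1 (by rw [(hw j).2]; rfl)
  set wu : Fin N → (Rkn k N)ˣ := fun j =>
    ⟨w j, MvPowerSeries.invOfUnit (w j) 1, hinv j, by rw [mul_comm]; exact hinv j⟩ with hwu
  refine ⟨fun j => ⟨wu j, mem_Usub.mpr ⟨(hw j).2, (hw j).1⟩⟩, ?_⟩
  apply Subtype.ext
  apply AlgEquiv.ext
  intro g
  rw [thetaFun_apply]
  exact (he g).symm

variable (k N) in
noncomputable def thetaHom : (Fin N → Usub k N) →* N0sub k N :=
  MonoidHom.mk' thetaFun thetaFun_mul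

variable (k N) in
noncomputable def Theta : (Fin N → Usub k N) ≃* N0sub k N :=
  MulEquiv.ofBijective (thetaHom k N) ⟨thetaFun_injective, thetaFun_surjective⟩

lemma Theta_apply (w : Fin N → Usub k N) (g : Rkn k N) :
    ((Theta k N w : N0sub k N) : Rkn k N ≃ₐ[ℂ] Rkn k N) g =
      mvSubst (subMap (fun i => MvPowerSeries.X (Sum.inl i))
        (fun j => ((w j : (Rkn k N)ˣ) : Rkn k N))) g := rfl

lemma isDkTuple_applyX {ψ : Rkn k N ≃ₐ[ℂ] Rkn k N} {f : Fin k → Rkn k N} {w : Fin N → Rkn k N}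
    (hf : IsDkTuple f) (he : ∀ g, ψ g = mvSubst (subMap f w) g) :
    IsDkTuple (fun i => ψ (MvPowerSeries.X (Sum.inl i))) := by
  intro i
  have h1 : ψ (MvPowerSeries.X (Sum.inl i)) = f i := psi_apply_X_inl hf he i
  constructor
  · show OnlyLambda (ψ (MvPowerSeries.X (Sum.inl i)))
    rw [h1]
    exact (hf i).1
  · show ∃ u, ψ (MvPowerSeries.X (Sum.inl i)) = MvPowerSeries.X (Sum.inl i) * u ∧
      MvPowerSeries.constantCoeff u = 1
    rw [h1]
    exact (hf i).2

/-- existence of the projection to the diffeomorphism part -/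
lemma pi_exists {ψ : Rkn k N ≃ₐ[ℂ] Rkn k N} (h : IsPsi ψ) :
    ∃ δ : Rkn k N ≃ₐ[ℂ] Rkn k N, IsPsiDiff δ ∧
      (∀ g, δ g = mvSubst (subMap (fun i => ψ (MvPowerSeries.X (Sum.inl i)))
        (fun _ => (1 : Rkn k N))) g) ∧
      (∀ g, δ.symm g = mvSubst (subMap (fun i => ψ.symm (MvPowerSeries.X (Sum.inl i)))
        (fun _ => (1 : Rkn k N))) g) := by
  obtain ⟨f, w, hf, hw, he⟩ := h
  obtain ⟨w', hw', hvw', hf', he'⟩ := psi_symm_data hf hw he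
  have ha : ∀ s, MvPowerSeries.constantCoeff
      (subMap f (fun _ => (1 : Rkn k N)) s) = 0 := subMap_constantCoeff hf
  have haInv : ∀ s, MvPowerSeries.constantCoeff
      (subMap (fun i => ψ.symm (MvPowerSeries.X (Sum.inl i))) (fun _ => (1 : Rkn k N)) s) = 0 :=
    subMap_constantCoeff hf'
  have h1 : ∀ s, mvSubst (subMap f (fun _ => (1 : Rkn k N)))
      (subMap (fun i => ψ.symm (MvPowerSeries.X (Sum.inl i))) (fun _ => (1 : Rkn k N)) s) =
      MvPowerSeries.X s := by
    rintro (i | j)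
    · rw [subMap_inl]
      rw [mvSubst_congr_inl (a := subMap f (fun _ => (1 : Rkn k N))) (a' := subMap f w)
        (p := ψ.symm (MvPowerSeries.X (Sum.inl i))) (fun i' => rfl) (hf' i).1, ← he,
        ψ.apply_symm_apply]
    · rw [subMap_inr, mvSubst_mul ha, mvSubst_one ha, one_mul, mvSubst_X ha, subMap_inr,
        one_mul]
  have h2 : ∀ s, mvSubst (subMap (fun i => ψ.symm (MvPowerSeries.X (Sum.inl i)))
      (fun _ => (1 : Rkn k N))) (subMap f (fun _ => (1 : Rkn k N)) s) = MvPowerSeries.X s := by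
    rintro (i | j)
    · rw [subMap_inl]
      rw [mvSubst_congr_inl
          (a := subMap (fun i => ψ.symm (MvPowerSeries.X (Sum.inl i))) (fun _ => (1 : Rkn k N)))
          (a' := subMap (fun i => ψ.symm (MvPowerSeries.X (Sum.inl i))) w') (p := f i)
          (fun i' => rfl) (hf i).1,
        ← he']
      have h3 : ψ.symm (f i) = MvPowerSeries.X (Sum.inl i) := by
        rw [← psi_apply_X_inl hf he i, ψ.symm_apply_apply]
      exact h3
    · rw [subMap_inr, mvSubst_mul haInv, mvSubst_one haInv, one_mul, mvSubst_X haInv,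
        subMap_inr, one_mul]
  refine ⟨mkPsi ha haInv h1 h2, ⟨f, hf, fun g => rfl⟩, fun g => ?_, fun g => rfl⟩
  rw [mkPsi_apply]
  refine congrArg (fun a => mvSubst a g) ?_
  funext s
  rcases s with i | j
  · show f i = ψ (MvPowerSeries.X (Sum.inl i))
    exact (psi_apply_X_inl hf he i).symm
  · rfl

variable (k N) in
noncomputable def piFun (ψ : Gsub k N) : Dsub k N :=
  ⟨(pi_exists ψ.2).choose, mem_Dsub.mpr (pi_exists ψ.2).choose_spec.1⟩

lemma piFun_apply (ψ : Gsub k N) (g : Rkn k N) :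
    ((piFun k N ψ : Dsub k N) : Rkn k N ≃ₐ[ℂ] Rkn k N) g =
      mvSubst (subMap (fun i => (ψ : Rkn k N ≃ₐ[ℂ] Rkn k N) (MvPowerSeries.X (Sum.inl i)))
        (fun _ => (1 : Rkn k N))) g :=
  (pi_exists ψ.2).choose_spec.2.1 g

lemma piFun_eq_of_data (ψ : Gsub k N) {f : Fin k → Rkn k N} {w : Fin N → Rkn k N}
    (hf : IsDkTuple f)
    (he : ∀ g, (ψ : Rkn k N ≃ₐ[ℂ] Rkn k N) g = mvSubst (subMap f w) g) (g : Rkn k N) :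
    ((piFun k N ψ : Dsub k N) : Rkn k N ≃ₐ[ℂ] Rkn k N) g =
      mvSubst (subMap f (fun _ => (1 : Rkn k N))) g := by
  rw [piFun_apply]
  refine congrArg (fun a => mvSubst a g) ?_
  funext s
  rcases s with i | j
  · show (ψ : Rkn k N ≃ₐ[ℂ] Rkn k N) (MvPowerSeries.X (Sum.inl i)) = f i
    exact psi_apply_X_inl hf he i
  · rfl

lemma piFun_mul (ψ1 ψ2 : Gsub k N) : piFun k N (ψ1 * ψ2) = piFun k N ψ1 * piFun k N ψ2 := by
  obtain ⟨f1, w1, hf1, hw1, he1⟩ := ψ1.2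
  obtain ⟨f2, w2, hf2, hw2, he2⟩ := ψ2.2
  apply Subtype.ext
  apply AlgEquiv.ext
  intro g
  -- data for the product
  obtain ⟨hfD, hwD, he⟩ := psi_mul_data hf1 hw1 hf2 hw2 he1 he2
  have hcoe : ((ψ1 * ψ2 : Gsub k N) : Rkn k N ≃ₐ[ℂ] Rkn k N) =
      (ψ1 : Rkn k N ≃ₐ[ℂ] Rkn k N) * (ψ2 : Rkn k N ≃ₐ[ℂ] Rkn k N) := rfl
  have hLHS : ((piFun k N (ψ1 * ψ2) : Dsub k N) : Rkn k N ≃ₐ[ℂ] Rkn k N) g =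
      mvSubst (subMap (fun i => (ψ1 : Rkn k N ≃ₐ[ℂ] Rkn k N) (f2 i))
        (fun _ => (1 : Rkn k N))) g := by
    refine piFun_eq_of_data (ψ1 * ψ2)
      (w := fun j => (ψ1 : Rkn k N ≃ₐ[ℂ] Rkn k N) (w2 j) * w1 j) hfD (fun g' => ?_) g
    rw [hcoe]
    exact he g'
  -- data for the two projections
  have hδ1 : ∀ g', ((piFun k N ψ1 : Dsub k N) : Rkn k N ≃ₐ[ℂ] Rkn k N) g' =
      mvSubst (subMap f1 (fun _ => (1 : Rkn k N))) g' :=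
    fun g' => piFun_eq_of_data ψ1 hf1 he1 g'
  have hδ2 : ∀ g', ((piFun k N ψ2 : Dsub k N) : Rkn k N ≃ₐ[ℂ] Rkn k N) g' =
      mvSubst (subMap f2 (fun _ => (1 : Rkn k N))) g' :=
    fun g' => piFun_eq_of_data ψ2 hf2 he2 g'
  obtain ⟨hfD', hwD', he'⟩ :=
    psi_mul_data hf1 isWTuple_one hf2 isWTuple_one hδ1 hδ2
  have hRHS : ((piFun k N ψ1 * piFun k N ψ2 : Dsub k N) : Rkn k N ≃ₐ[ℂ] Rkn k N) g =
      mvSubst (subMap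
        (fun i => ((piFun k N ψ1 : Dsub k N) : Rkn k N ≃ₐ[ℂ] Rkn k N) (f2 i))
        (fun j => ((piFun k N ψ1 : Dsub k N) : Rkn k N ≃ₐ[ℂ] Rkn k N) 1 * 1)) g := he' g
  rw [hLHS, hRHS]
  refine congrArg (fun a => mvSubst a g) ?_
  funext s
  rcases s with i | j
  · show (ψ1 : Rkn k N ≃ₐ[ℂ] Rkn k N) (f2 i) =
      ((piFun k N ψ1 : Dsub k N) : Rkn k N ≃ₐ[ℂ] Rkn k N) (f2 i)
    rw [he1, hδ1]
    exact mvSubst_congr_inl (a := subMap f1 w1) (a' := subMap f1 (fun _ => (1 : Rkn k N)))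
      (p := f2 i) (fun i' => rfl) (hf2 i).1
  · show 1 * MvPowerSeries.X (Sum.inr j) =
      (((piFun k N ψ1 : Dsub k N) : Rkn k N ≃ₐ[ℂ] Rkn k N) 1 * 1) * MvPowerSeries.X (Sum.inr j)
    rw [map_one]
    simp

variable (k N) in
noncomputable def piHom : Gsub k N →* Dsub k N :=
  MonoidHom.mk' (piFun k N) piFun_mul

variable (k N) in
noncomputable def sHom : Dsub k N →* Gsub k N := Subgroup.inclusion D_le_G

lemma sHom_coe (δ : Dsub k N) :
    ((sHom k N δ : Gsub k N) : Rkn k N ≃ₐ[ℂ] Rkn k N) = (δ : Rkn k N ≃ₐ[ℂ] Rkn k N) := rfl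

lemma pi_sHom (δ : Dsub k N) : piHom k N (sHom k N δ) = δ := by
  obtain ⟨f, hf, he⟩ := δ.2
  apply Subtype.ext
  apply AlgEquiv.ext
  intro g
  have : (piHom k N (sHom k N δ) : Rkn k N ≃ₐ[ℂ] Rkn k N) g =
      mvSubst (subMap f (fun _ => (1 : Rkn k N))) g :=
    piFun_eq_of_data (sHom k N δ) hf he g
  rw [this, ← he g]

lemma piHom_surjective : Function.Surjective (piHom k N) :=
  fun δ => ⟨sHom k N δ, pi_sHom δ⟩

lemma piHom_ker (ψ : Gsub k N) :
    piHom k N ψ = 1 ↔ (ψ : Rkn k N ≃ₐ[ℂ] Rkn k N) ∈ N0sub k N := by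
  constructor
  · intro h
    refine mem_N0sub.mpr (isPsiId_of_isPsi ψ.2 fun i => ?_)
    have h1 : ((piHom k N ψ : Dsub k N) : Rkn k N ≃ₐ[ℂ] Rkn k N)
        (MvPowerSeries.X (Sum.inl i)) =
        (ψ : Rkn k N ≃ₐ[ℂ] Rkn k N) (MvPowerSeries.X (Sum.inl i)) := by
      obtain ⟨f, w, hf, hw, he⟩ := ψ.2
      have := piFun_eq_of_data ψ hf he (MvPowerSeries.X (Sum.inl i))
      show ((piFun k N ψ : Dsub k N) : Rkn k N ≃ₐ[ℂ] Rkn k N)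
        (MvPowerSeries.X (Sum.inl i)) = _
      rw [this, mvSubst_X (subMap_constantCoeff hf), subMap_inl,
        psi_apply_X_inl hf he i]
    rw [h] at h1
    rw [← h1]
    rfl
  · intro h
    obtain ⟨w, hw, he⟩ := mem_N0sub.mp h
    apply Subtype.ext
    apply AlgEquiv.ext
    intro g
    have : (piHom k N ψ : Rkn k N ≃ₐ[ℂ] Rkn k N) g =
        mvSubst (subMap (fun i => MvPowerSeries.X (Sum.inl i)) (fun _ => (1 : Rkn k N))) g :=
      piFun_eq_of_data ψ isDkTuple_id he g
    rw [this, subMap_id_one, mvSubst_id]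
    rfl

/-- conjugation stability of `N₀` inside `G` -/
lemma N0_normal_in_G {ψ ν : Rkn k N ≃ₐ[ℂ] Rkn k N} (hψ : IsPsi ψ) (hν : IsPsiId ν) :
    IsPsiId (ψ * ν * ψ⁻¹) := by
  have hνPsi : IsPsi ν := isPsiId_isPsi hν
  have hconj : IsPsi (ψ * ν * ψ⁻¹) := isPsi_mul (isPsi_mul hψ hνPsi) (isPsi_inv hψ)
  refine isPsiId_of_isPsi hconj fun i => ?_
  obtain ⟨w, hw, he⟩ := hν
  have hOL : OnlyLambda (ψ.symm (MvPowerSeries.X (Sum.inl i))) := by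
    refine onlyLambda_reflect hψ ?_
    rw [ψ.apply_symm_apply]
    exact onlyLambda_X_inl i
  have hfix : ν (ψ.symm (MvPowerSeries.X (Sum.inl i))) = ψ.symm (MvPowerSeries.X (Sum.inl i)) := by
    rw [he]
    exact mvSubst_eq_self_of_inl_X
      (a := subMap (fun i' => MvPowerSeries.X (Sum.inl i')) w) (fun i' => rfl) hOL
  have : (ψ * ν * ψ⁻¹) (MvPowerSeries.X (Sum.inl i)) =
      ψ (ν (ψ.symm (MvPowerSeries.X (Sum.inl i)))) := rfl
  rw [this, hfix, ψ.apply_symm_apply]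

lemma conj_mem_N0 (δ : Dsub k N) (ν : N0sub k N) :
    (δ : Rkn k N ≃ₐ[ℂ] Rkn k N) * (ν : Rkn k N ≃ₐ[ℂ] Rkn k N) *
      (δ : Rkn k N ≃ₐ[ℂ] Rkn k N)⁻¹ ∈ N0sub k N :=
  mem_N0sub.mpr (N0_normal_in_G (isPsiDiff_isPsi δ.2) (mem_N0sub.mp ν.2))

lemma conj_mem_N0' (δ : Dsub k N) (ν : N0sub k N) :
    (δ : Rkn k N ≃ₐ[ℂ] Rkn k N)⁻¹ * (ν : Rkn k N ≃ₐ[ℂ] Rkn k N) *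
      (δ : Rkn k N ≃ₐ[ℂ] Rkn k N) ∈ N0sub k N := by
  have := mem_N0sub.mpr (N0_normal_in_G (isPsi_inv (isPsiDiff_isPsi δ.2))
    (mem_N0sub.mp ν.2))
  rwa [inv_inv] at this

/-- conjugation action of `D` on `N₀` -/
noncomputable def conjAut (δ : Dsub k N) : MulAut (N0sub k N) where
  toFun ν := ⟨(δ : Rkn k N ≃ₐ[ℂ] Rkn k N) * ν * (δ : Rkn k N ≃ₐ[ℂ] Rkn k N)⁻¹,
    conj_mem_N0 δ ν⟩
  invFun ν := ⟨(δ : Rkn k N ≃ₐ[ℂ] Rkn k N)⁻¹ * ν * (δ : Rkn k N ≃ₐ[ℂ] Rkn k N),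
    conj_mem_N0' δ ν⟩
  left_inv ν := by
    apply Subtype.ext
    show (δ : Rkn k N ≃ₐ[ℂ] Rkn k N)⁻¹ * ((δ : Rkn k N ≃ₐ[ℂ] Rkn k N) * ν *
      (δ : Rkn k N ≃ₐ[ℂ] Rkn k N)⁻¹) * (δ : Rkn k N ≃ₐ[ℂ] Rkn k N) = (ν : Rkn k N ≃ₐ[ℂ] Rkn k N)
    group
  right_inv ν := by
    apply Subtype.ext
    show (δ : Rkn k N ≃ₐ[ℂ] Rkn k N) * ((δ : Rkn k N ≃ₐ[ℂ] Rkn k N)⁻¹ * ν *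
      (δ : Rkn k N ≃ₐ[ℂ] Rkn k N)) * (δ : Rkn k N ≃ₐ[ℂ] Rkn k N)⁻¹ = (ν : Rkn k N ≃ₐ[ℂ] Rkn k N)
    group
  map_mul' ν1 ν2 := by
    apply Subtype.ext
    show (δ : Rkn k N ≃ₐ[ℂ] Rkn k N) * (↑ν1 * ↑ν2) * (δ : Rkn k N ≃ₐ[ℂ] Rkn k N)⁻¹ =
      ((δ : Rkn k N ≃ₐ[ℂ] Rkn k N) * ↑ν1 * (δ : Rkn k N ≃ₐ[ℂ] Rkn k N)⁻¹) *
      ((δ : Rkn k N ≃ₐ[ℂ] Rkn k N) * ↑ν2 * (δ : Rkn k N ≃ₐ[ℂ] Rkn k N)⁻¹)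
    group

variable (k N) in
noncomputable def phiHom : Dsub k N →* MulAut (N0sub k N) where
  toFun := conjAut
  map_one' := by
    apply MulEquiv.ext
    intro ν
    apply Subtype.ext
    show ((1 : Dsub k N) : Rkn k N ≃ₐ[ℂ] Rkn k N) * ν *
      ((1 : Dsub k N) : Rkn k N ≃ₐ[ℂ] Rkn k N)⁻¹ = (ν : Rkn k N ≃ₐ[ℂ] Rkn k N)
    simp
  map_mul' δ1 δ2 := by
    apply MulEquiv.ext
    intro ν
    apply Subtype.ext
    show ((δ1 * δ2 : Dsub k N) : Rkn k N ≃ₐ[ℂ] Rkn k N) * ν *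
        ((δ1 * δ2 : Dsub k N) : Rkn k N ≃ₐ[ℂ] Rkn k N)⁻¹ =
      (δ1 : Rkn k N ≃ₐ[ℂ] Rkn k N) * ((δ2 : Rkn k N ≃ₐ[ℂ] Rkn k N) * ν *
        (δ2 : Rkn k N ≃ₐ[ℂ] Rkn k N)⁻¹) * (δ1 : Rkn k N ≃ₐ[ℂ] Rkn k N)⁻¹
    rw [Subgroup.coe_mul]
    group

variable (k N) in
noncomputable def nuG (ψ : Gsub k N) : Gsub k N := ψ * (sHom k N (piHom k N ψ))⁻¹

lemma piHom_nuG (ψ : Gsub k N) : piHom k N (nuG k N ψ) = 1 := by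
  rw [nuG, map_mul, map_inv, pi_sHom, mul_inv_cancel]

lemma nuG_mem_N0 (ψ : Gsub k N) : ((nuG k N ψ : Gsub k N) : Rkn k N ≃ₐ[ℂ] Rkn k N) ∈ N0sub k N :=
  (piHom_ker _).mp (piHom_nuG ψ)

variable (k N) in
noncomputable def bigFun (ψ : Gsub k N) : SemidirectProduct (N0sub k N) (Dsub k N) (phiHom k N) :=
  ⟨⟨(nuG k N ψ : Rkn k N ≃ₐ[ℂ] Rkn k N), nuG_mem_N0 ψ⟩, piHom k N ψ⟩

lemma bigFun_mul (ψ1 ψ2 : Gsub k N) : bigFun k N (ψ1 * ψ2) = bigFun k N ψ1 * bigFun k N ψ2 := by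
  have key : nuG k N (ψ1 * ψ2) =
      nuG k N ψ1 * (sHom k N (piHom k N ψ1) * nuG k N ψ2 * (sHom k N (piHom k N ψ1))⁻¹) := by
    simp only [nuG, map_mul]
    group
  refine SemidirectProduct.ext ?_ ?_
  · apply Subtype.ext
    show ((nuG k N (ψ1 * ψ2) : Gsub k N) : Rkn k N ≃ₐ[ℂ] Rkn k N) = _
    have hr : (((bigFun k N ψ1 * bigFun k N ψ2).left : N0sub k N) : Rkn k N ≃ₐ[ℂ] Rkn k N) =
        ((nuG k N ψ1 : Gsub k N) : Rkn k N ≃ₐ[ℂ] Rkn k N) *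
        (((sHom k N (piHom k N ψ1) : Gsub k N) : Rkn k N ≃ₐ[ℂ] Rkn k N) *
          ((nuG k N ψ2 : Gsub k N) : Rkn k N ≃ₐ[ℂ] Rkn k N) *
          ((sHom k N (piHom k N ψ1) : Gsub k N) : Rkn k N ≃ₐ[ℂ] Rkn k N)⁻¹) := rfl
    rw [hr, key]
    rfl
  · show piHom k N (ψ1 * ψ2) = piHom k N ψ1 * piHom k N ψ2
    rw [map_mul]

variable (k N) in
noncomputable def bigHom : Gsub k N →* SemidirectProduct (N0sub k N) (Dsub k N) (phiHom k N) :=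
  MonoidHom.mk' (bigFun k N) bigFun_mul

lemma bigHom_injective : Function.Injective (bigHom k N) := by
  refine (injective_iff_map_eq_one (bigHom k N)).mpr fun ψ h => ?_
  have hr : piHom k N ψ = 1 := congrArg SemidirectProduct.right h
  have hl := congrArg SemidirectProduct.left h
  have hl' : nuG k N ψ = 1 := by
    apply Subtype.ext
    have : ((nuG k N ψ : Gsub k N) : Rkn k N ≃ₐ[ℂ] Rkn k N) = 1 :=
      congrArg (fun x : ↥(N0sub k N) => (x : Rkn k N ≃ₐ[ℂ] Rkn k N)) hl
    exact this
  have : ψ = sHom k N (piHom k N ψ) := by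
    have := hl'
    rw [nuG] at this
    exact (mul_inv_eq_one.mp this)
  rw [this, hr, map_one]

lemma bigHom_surjective : Function.Surjective (bigHom k N) := by
  rintro ⟨n, d⟩
  set ψ : Gsub k N := Subgroup.inclusion N0_le_G n * sHom k N d with hψ
  have hπn : piHom k N (Subgroup.inclusion N0_le_G n) = 1 := by
    rw [piHom_ker]
    exact n.2
  have hπ : piHom k N ψ = d := by
    rw [hψ, map_mul, hπn, one_mul, pi_sHom]
  refine ⟨ψ, ?_⟩
  refine SemidirectProduct.ext ?_ ?_
  · apply Subtype.ext
    show ((nuG k N ψ : Gsub k N) : Rkn k N ≃ₐ[ℂ] Rkn k N) = (n : Rkn k N ≃ₐ[ℂ] Rkn k N)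
    have : nuG k N ψ = Subgroup.inclusion N0_le_G n := by
      rw [nuG, hπ, hψ, mul_inv_cancel_right]
    rw [this]
    rfl
  · exact hπ

end RenGp


/-- The group `G = {Ψ_{f,w}}` of substitution automorphisms of
`R = ℂ[[λ₁,…,λ_k,φ₁,…,φ_N]]` is the semidirect product of the normal subgroup
`N₀ = {Ψ_{id,w}}` — isomorphic to the direct product of `N` copies of the multiplicative
group of `λ`-power series with constant coefficient `1` (a subgroup of `R^×`) — by the
subgroup `{Ψ_{f,1}}` of formal diffeomorphisms of the coupling constants (representing
`D_kᵒᵖ` via the splitting `f ↦ Ψ_{f,1}`): the projection `Ψ_{f,w} ↦ Ψ_{f,1}` is a split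
surjective homomorphism with kernel `N₀`, whence `G ≅ N₀ ⋊ D_kᵒᵖ`. -/
theorem renormalization_group_semidirect_product (k N : ℕ) (hk : 1 ≤ k) (hN : 1 ≤ N) :
    ∃ G N₀ D : Subgroup (Rkn k N ≃ₐ[ℂ] Rkn k N),
      (G : Set (Rkn k N ≃ₐ[ℂ] Rkn k N)) = {ψ | IsPsi ψ} ∧
      (N₀ : Set (Rkn k N ≃ₐ[ℂ] Rkn k N)) = {ψ | IsPsiId ψ} ∧
      (D : Set (Rkn k N ≃ₐ[ℂ] Rkn k N)) = {ψ | IsPsiDiff ψ} ∧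
      N₀ ≤ G ∧ D ≤ G ∧
      -- (1) `N₀` is normal in `G` …
      (∀ ψ ∈ G, ∀ ν ∈ N₀, ψ * ν * ψ⁻¹ ∈ N₀) ∧
      -- … and `w ↦ Ψ_{id,w}` is an isomorphism from the direct product of `N` copies of
      -- the multiplicative group of `λ`-series with constant coefficient `1` onto `N₀`:
      (∃ U : Subgroup (Rkn k N)ˣ,
        (U : Set (Rkn k N)ˣ) =
          {u : (Rkn k N)ˣ |
            MvPowerSeries.constantCoeff (u : Rkn k N) = 1 ∧ OnlyLambda (u : Rkn k N)} ∧
        ∃ Θ : (Fin N → U) ≃* N₀,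
          ∀ (w : Fin N → U) (g : Rkn k N),
            ((Θ w : Rkn k N ≃ₐ[ℂ] Rkn k N)) g =
              mvSubst (subMap (fun i => MvPowerSeries.X (Sum.inl i))
                (fun j => ((w j : (Rkn k N)ˣ) : Rkn k N))) g) ∧
      -- (2) `Ψ_{f,w} ↦ Ψ_{f,1}` is a split surjective homomorphism `G → D` with kernel
      -- `N₀`:
      (∃ π : G →* D,
        Function.Surjective π ∧
        (∀ (ψ : G) (f : Fin k → Rkn k N) (w : Fin N → Rkn k N),
          IsDkTuple f → IsWTuple w →
          (∀ g : Rkn k N, (ψ : Rkn k N ≃ₐ[ℂ] Rkn k N) g = mvSubst (subMap f w) g) →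
          ∀ g : Rkn k N, ((π ψ : Rkn k N ≃ₐ[ℂ] Rkn k N)) g =
            mvSubst (subMap f fun _ => (1 : Rkn k N)) g) ∧
        (∀ ψ : G, π ψ = 1 ↔ (ψ : Rkn k N ≃ₐ[ℂ] Rkn k N) ∈ N₀) ∧
        (∃ s : D →* G,
          (∀ δ : D, ((s δ : G) : Rkn k N ≃ₐ[ℂ] Rkn k N) = (δ : Rkn k N ≃ₐ[ℂ] Rkn k N)) ∧
          ∀ δ : D, π (s δ) = δ)) ∧
      -- consequently `G` is a semidirect product `N₀ ⋊ D`: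
      (∃ φ : D →* MulAut N₀, Nonempty (G ≃* SemidirectProduct N₀ D φ)) := by
  classical
  refine ⟨RenGp.Gsub k N, RenGp.N0sub k N, RenGp.Dsub k N, rfl, rfl, rfl,
    RenGp.N0_le_G, RenGp.D_le_G, ?_, ?_, ?_, ?_⟩
  · intro ψ hψ ν hν
    exact RenGp.mem_N0sub.mpr
      (RenGp.N0_normal_in_G (RenGp.mem_Gsub.mp hψ) (RenGp.mem_N0sub.mp hν))
  · exact ⟨RenGp.Usub k N, rfl, RenGp.Theta k N, fun w g => RenGp.Theta_apply w g⟩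
  · refine ⟨RenGp.piHom k N, RenGp.piHom_surjective, ?_, RenGp.piHom_ker,
      ⟨RenGp.sHom k N, fun δ => rfl, RenGp.pi_sHom⟩⟩
    intro ψ f w hf hw he g
    exact RenGp.piFun_eq_of_data ψ hf he g
  · exact ⟨RenGp.phiHom k N, ⟨MulEquiv.ofBijective (RenGp.bigHom k N)
      ⟨RenGp.bigHom_injective, RenGp.bigHom_surjective⟩⟩⟩
end
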